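/- arXiv:1208.2792 — 8 statements merged into one kernel-verified Lean document; each statement's English description precedes it below -/
import Mathlib

section
/- A group G has the matching property if and only if G is torsion-free or cyclic of prime order. -/
/-- A matching from the finite subset `A` to the finite subset `B` of a group `G`
is (witnessed by) a map `f` restricting to a bijection from `A` onto `B`
such that `a * f a ∉ A` for all `a ∈ A`. -/
def IsGroupMatching {G : Type*} [Group G] (A B : Finset G) (f : G → G) : Prop :=
  Set.BijOn f A B ∧ ∀ a ∈ A, a * f a ∉ A

/-- `G` has the matching property if for all nonempty finite subsets `A, B` of `G`
with `|A| = |B|` and `1 ∉ B`, there exists a matching from `A` to `B`. -/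
def HasMatchingProperty (G : Type*) [Group G] : Prop :=
  ∀ A B : Finset G, A.Nonempty → B.Nonempty → A.card = B.card → (1 : G) ∉ B →
    ∃ f : G → G, IsGroupMatching A B f

open Finset
open scoped Pointwise

/-- If `G` has a nontrivial finite cyclic subgroup avoiding some point, then `G` does not
have the matching property. -/
private lemma no_matching_of_zpowers {G : Type*} [Group G] {x y : G}
    (hx : IsOfFinOrder x) (hx1 : x ≠ 1) (hy : y ∉ Subgroup.zpowers x) :
    ¬ HasMatchingProperty G := by
  classical
  intro h
  have hfin : (Subgroup.zpowers x : Set G).Finite := hx.finite_zpowers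
  set A : Finset G := hfin.toFinset with hA
  have hmemA : ∀ g, g ∈ A ↔ g ∈ Subgroup.zpowers x := fun g => Set.Finite.mem_toFinset _
  have h1A : (1 : G) ∈ A := (hmemA 1).2 (one_mem _)
  have hxA : x ∈ A := (hmemA x).2 (Subgroup.mem_zpowers x)
  have hyA : y ∉ A := fun hmem => hy ((hmemA y).1 hmem)
  have hy1 : y ≠ 1 := fun hy1 => hy (hy1 ▸ one_mem _)
  set B : Finset G := insert y (A.erase 1) with hB
  have hyE : y ∉ A.erase 1 := fun hmem => hyA (mem_of_mem_erase hmem)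
  have h1B : (1 : G) ∉ B := by
    simp only [hB, mem_insert, mem_erase]
    rintro (h1 | ⟨h1, _⟩)
    · exact hy1 h1.symm
    · exact h1 rfl
  have hcard : A.card = B.card := by
    rw [hB, card_insert_of_notMem hyE, card_erase_of_mem h1A]
    have : 1 ≤ A.card := card_pos.2 ⟨1, h1A⟩
    omega
  obtain ⟨f, ⟨hmaps, hinj, _⟩, hnot⟩ :=
    h A B ⟨1, h1A⟩ ⟨y, mem_insert_self _ _⟩ hcard h1B
  have key : ∀ a ∈ A, f a = y := by
    intro a ha
    have hfa : f a ∈ B := hmaps (by exact_mod_cast ha)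
    rw [hB, mem_insert] at hfa
    rcases hfa with hfa | hfa
    · exact hfa
    · exfalso
      apply hnot a ha
      have : f a ∈ Subgroup.zpowers x := (hmemA _).1 (mem_of_mem_erase hfa)
      exact (hmemA _).2 (mul_mem ((hmemA _).1 ha) this)
  have : (1 : G) = x := by
    apply hinj (by exact_mod_cast h1A) (by exact_mod_cast hxA)
    rw [key 1 h1A, key x hxA]
  exact hx1 this.symm

/-- A group `G` has the matching property iff `G` is torsion-free or cyclic of prime order. -/
theorem matching_property_iff (G : Type*) [Group G] :
    HasMatchingProperty G ↔
      (∀ g : G, g ≠ 1 → ¬IsOfFinOrder g) ∨ (IsCyclic G ∧ (Nat.card G).Prime) := by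
  classical
  constructor
  · intro h
    by_contra hcon
    push_neg at hcon
    obtain ⟨hTF, hcyc⟩ := hcon
    obtain ⟨x, hx1, hxfin⟩ := hTF
    by_cases htop : ∀ y : G, y ∈ Subgroup.zpowers x
    · -- `G` is finite cyclic, generated by `x`.
      have hcyclic : IsCyclic G := ⟨x, htop⟩
      have hzt : Subgroup.zpowers x = ⊤ := by
        rw [Subgroup.eq_top_iff' _]; exact htop
      have hfinG : Finite G := by
        have : (Set.univ : Set G).Finite := by
          have := hxfin.finite_zpowers
          rw [hzt] at this
          simpa using this
        exact Set.finite_univ_iff.mp this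
      have hcardG : Nat.card G = orderOf x := by
        rw [← Nat.card_zpowers, hzt, Subgroup.card_top]
      have hnp : ¬ (Nat.card G).Prime := fun hp => hcyc hcyclic hp
      have hn2 : 2 ≤ Nat.card G := by
        rw [hcardG]
        have h0 : orderOf x ≠ 0 := hxfin.orderOf_pos.ne'
        have h1 : orderOf x ≠ 1 := by
          simpa [orderOf_eq_one_iff] using hx1
        omega
      set n := Nat.card G with hn
      have hq : n.minFac.Prime := Nat.minFac_prime (by omega)
      have hqn : n.minFac ≠ n := fun hEq => hnp (hEq ▸ hq)
      haveI : Fintype G := Fintype.ofFinite G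
      have hdvd : n.minFac ∣ Fintype.card G := by
        rw [← Nat.card_eq_fintype_card, ← hn]; exact Nat.minFac_dvd n
      obtain ⟨z, hz⟩ := exists_prime_orderOf_dvd_card n.minFac hdvd (hp := ⟨hq⟩)
      have hz1 : z ≠ 1 := by
        intro hEq
        rw [hEq, orderOf_one] at hz
        exact hq.one_lt.ne' hz.symm
      have hzfin : IsOfFinOrder z := by
        rw [← orderOf_pos_iff, hz]; exact hq.pos
      have hzne : Subgroup.zpowers z ≠ ⊤ := by
        intro hEq
        have : Nat.card (Subgroup.zpowers z) = n := by
          rw [hEq, Subgroup.card_top]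
        rw [Nat.card_zpowers, hz] at this
        exact hqn this
      obtain ⟨y, hy⟩ : ∃ y, y ∉ Subgroup.zpowers z := by
        by_contra hall
        push_neg at hall
        exact hzne ((Subgroup.eq_top_iff' _).2 hall)
      exact no_matching_of_zpowers hzfin hz1 hy h
    · push_neg at htop
      obtain ⟨y, hy⟩ := htop
      exact no_matching_of_zpowers hxfin hx1 hy h
  · intro hG A B hA hB hcard h1B
    -- Key Cauchy-Davenport type inequality.
    have key : ∀ S T : Finset G, S.Nonempty → T.Nonempty → (S * T).card ≤ A.card →
        S.card + T.card - 1 ≤ (S * T).card := by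
      rcases hG with hTF | ⟨_, hp⟩
      · intro S T hS hT _
        have hmo : Monoid.minOrder G = ⊤ :=
          le_antisymm le_top (Monoid.le_minOrder.2 fun a ha hf => absurd hf (hTF a ha))
        simpa only [hmo, min_eq_right, le_top, Nat.cast_le] using cauchy_davenport_minOrder_mul hS hT
      · -- cyclic of prime order case
        haveI : Finite G := Nat.finite_of_card_ne_zero hp.pos.ne'
        haveI : Fintype G := Fintype.ofFinite G
        have hcardeq : Fintype.card G = Nat.card G := Nat.card_eq_fintype_card.symm
        have hAlt : A.card < Nat.card G := by
          rcases lt_or_eq_of_le (le_trans (card_le_card (subset_univ A))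
            (le_of_eq (by rw [card_univ, hcardeq]))) with hlt | hEq
          · exact hlt
          · exfalso
            have hAu : A = univ := eq_of_subset_of_card_le (subset_univ A)
              (by rw [card_univ, hcardeq, hEq])
            have hBu : B = univ := eq_of_subset_of_card_le (subset_univ B)
              (by rw [card_univ, hcardeq, ← hEq, hcard])
            exact h1B (hBu ▸ mem_univ 1)
        have hmin : (Nat.card G : ℕ∞) ≤ Monoid.minOrder G := by
          rw [Monoid.le_minOrder]
          intro a ha1 hafin
          have hdvd : orderOf a ∣ Nat.card G := orderOf_dvd_natCard a
          rcases (Nat.Prime.eq_one_or_self_of_dvd hp _ hdvd) with h1 | hEq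
          · exact absurd (orderOf_eq_one_iff.1 h1) ha1
          · exact le_of_eq (by exact_mod_cast hEq.symm)
        intro S T hS hT hsub
        have hcd := cauchy_davenport_minOrder_mul hS hT
        have hlt2 : ((S * T).card : ℕ∞) < (Nat.card G : ℕ∞) := by
          exact_mod_cast lt_of_le_of_lt hsub hAlt
        rcases min_le_iff.1 hcd with hle | hle
        · exact absurd (lt_of_le_of_lt (le_trans hmin hle) hlt2) (lt_irrefl _)
        · exact_mod_cast hle
    -- Hall's condition for the bipartite graph `a ~ b` iff `a * b ∉ A`.
    set t : {a // a ∈ A} → Finset G := fun a => B.filter (fun b => a.1 * b ∉ A) with ht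
    have hall : ∀ s : Finset {a // a ∈ A}, s.card ≤ (s.biUnion t).card := by
      intro s
      by_contra hlt'
      push_neg at hlt'
      have hs : s.Nonempty := by
        rw [← card_pos]; omega
      set S : Finset G := s.image Subtype.val with hSdef
      have hScard : S.card = s.card := card_image_of_injective _ Subtype.val_injective
      have hSsub : S ⊆ A := by
        intro a ha
        obtain ⟨a', _, rfl⟩ := mem_image.1 ha
        exact a'.2
      have hSne : S.Nonempty := hs.image _
      set N : Finset G := s.biUnion t with hNdef
      have hNsub : N ⊆ B := by
        intro b hb
        obtain ⟨a', _, hb'⟩ := mem_biUnion.1 hb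
        exact mem_of_mem_filter _ hb'
      set T : Finset G := B \ N with hTdef
      have hTcard : T.card = B.card - N.card := card_sdiff_of_subset hNsub
      have hNcard : N.card < S.card := by rw [hScard]; exact hlt'
      have hSB : S.card ≤ B.card := by
        rw [← hcard]; exact card_le_card hSsub
      have hTne : T.Nonempty := by
        rw [← card_pos, hTcard]
        have := card_le_card hNsub
        omega
      have hmulmem : ∀ a ∈ S, ∀ b ∈ T, a * b ∈ A := by
        intro a ha b hb
        obtain ⟨a', ha', rfl⟩ := mem_image.1 ha
        by_contra hnot
        rw [hTdef, mem_sdiff] at hb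
        exact hb.2 (mem_biUnion.2 ⟨a', ha', mem_filter.2 ⟨hb.1, hnot⟩⟩)
      have h1T : (1 : G) ∉ T := fun hmem => h1B (sdiff_subset hmem)
      set U : Finset G := insert 1 T with hUdef
      have hUcard : U.card = T.card + 1 := card_insert_of_notMem h1T
      have hSU : S * U ⊆ A := by
        intro g hg
        obtain ⟨a, ha, u, hu, rfl⟩ := mem_mul.1 hg
        rw [hUdef, mem_insert] at hu
        rcases hu with rfl | hu
        · rw [mul_one]; exact hSsub ha
        · exact hmulmem a ha u hu
      have hkey := key S U hSne ⟨1, mem_insert_self _ _⟩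
        (le_trans (card_le_card hSU) le_rfl)
      rw [hUcard] at hkey
      have hfin : S.card + T.card ≤ A.card := by
        have := card_le_card hSU
        omega
      rw [hcard] at hfin
      have := card_le_card hNsub
      omega
    obtain ⟨f₀, hf₀inj, hf₀mem⟩ := (Finset.all_card_le_biUnion_card_iff_exists_injective t).1 hall
    set f : G → G := fun g => if h : g ∈ A then f₀ ⟨g, h⟩ else 1 with hf
    have hfval : ∀ g (hg : g ∈ A), f g = f₀ ⟨g, hg⟩ := fun g hg => dif_pos hg
    have hmapsB : ∀ g (hg : g ∈ A), f g ∈ B := by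
      intro g hg
      rw [hfval g hg]
      exact mem_of_mem_filter _ (hf₀mem ⟨g, hg⟩)
    have hinjOn : Set.InjOn f ↑A := by
      intro a ha b hb hEq
      rw [mem_coe] at ha hb
      rw [hfval a ha, hfval b hb] at hEq
      exact congrArg Subtype.val (hf₀inj hEq)
    have himage : A.image f = B := by
      apply eq_of_subset_of_card_le
      · intro b hb
        obtain ⟨a, ha, rfl⟩ := mem_image.1 hb
        exact hmapsB a ha
      · rw [card_image_of_injOn hinjOn, hcard]
    refine ⟨f, ⟨⟨fun a ha => ?_, hinjOn, fun b hb => ?_⟩, fun a ha => ?_⟩⟩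
    · rw [mem_coe] at ha
      exact mem_coe.2 (hmapsB a ha)
    · rw [mem_coe, ← himage] at hb
      obtain ⟨a, ha, rfl⟩ := mem_image.1 hb
      exact ⟨a, mem_coe.2 ha, rfl⟩
    · rw [hfval a ha]
      exact (mem_filter.1 (hf₀mem ⟨a, ha⟩)).2
end

section
/- Let G be a group and B a nonempty finite subset of G. Then there exists a matching from B to B if and only if 1 ∉ B. -/
open Finset
open scoped Pointwise

section Kemperman

variable {G : Type*} [Group G] [DecidableEq G]

private lemma inv_mem_of_mul_right_closed {A : Finset G} {g : G} (h1 : (1 : G) ∈ A)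
    (hsub : ∀ a ∈ A, a * g ∈ A) : g⁻¹ ∈ A := by
  have hpow : ∀ n : ℕ, g ^ n ∈ A := by
    intro n
    induction n with
    | zero => simpa using h1
    | succ n ih => rw [pow_succ]; exact hsub _ ih
  have key : ∀ i j : ℕ, i < j → g ^ i = g ^ j → g⁻¹ ∈ A := by
    intro i j hlt hij
    have hcan : g ^ i * g ^ (j - i) = g ^ i * 1 := by
      rw [mul_one, ← pow_add, Nat.add_sub_cancel' hlt.le]
      exact hij.symm
    have h1' : g ^ (j - i) = 1 := mul_left_cancel hcan
    have hmul : g ^ (j - i - 1) * g = 1 := by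
      rw [← pow_succ]
      have heq : j - i - 1 + 1 = j - i := by omega
      rw [heq]; exact h1'
    have hinv := inv_eq_of_mul_eq_one_left hmul
    rw [hinv]
    exact hpow _
  have hninj : ¬ Function.Injective (fun n : ℕ => g ^ n) := by
    intro hinj
    have hinf : (Set.range fun n : ℕ => g ^ n).Infinite := Set.infinite_range_of_injective hinj
    refine hinf (((A : Finset G) : Set G).toFinite.subset ?_)
    rintro x ⟨n, rfl⟩
    exact_mod_cast hpow n
  rw [Function.not_injective_iff] at hninj
  obtain ⟨i, j, hij, hne⟩ := hninj
  rcases hne.lt_or_gt with h | h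
  · exact key i j h hij
  · exact key j i h hij.symm

private lemma inv_mem_of_mul_left_closed {B : Finset G} {g : G} (h1 : (1 : G) ∈ B)
    (hsub : ∀ b ∈ B, g * b ∈ B) : g⁻¹ ∈ B := by
  have hpow : ∀ n : ℕ, g ^ n ∈ B := by
    intro n
    induction n with
    | zero => simpa using h1
    | succ n ih => rw [pow_succ']; exact hsub _ ih
  have key : ∀ i j : ℕ, i < j → g ^ i = g ^ j → g⁻¹ ∈ B := by
    intro i j hlt hij
    have hcan : g ^ i * g ^ (j - i) = g ^ i * 1 := by
      rw [mul_one, ← pow_add, Nat.add_sub_cancel' hlt.le]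
      exact hij.symm
    have h1' : g ^ (j - i) = 1 := mul_left_cancel hcan
    have hmul : g * g ^ (j - i - 1) = 1 := by
      rw [← pow_succ']
      have heq : j - i - 1 + 1 = j - i := by omega
      rw [heq]; exact h1'
    have hinv := inv_eq_of_mul_eq_one_right hmul
    rw [hinv]
    exact hpow _
  have hninj : ¬ Function.Injective (fun n : ℕ => g ^ n) := by
    intro hinj
    have hinf : (Set.range fun n : ℕ => g ^ n).Infinite := Set.infinite_range_of_injective hinj
    refine hinf (((B : Finset G) : Set G).toFinite.subset ?_)
    rintro x ⟨n, rfl⟩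
    exact_mod_cast hpow n
  rw [Function.not_injective_iff] at hninj
  obtain ⟨i, j, hij, hne⟩ := hninj
  rcases hne.lt_or_gt with h | h
  · exact key i j h hij
  · exact key j i h hij.symm

/-- Kemperman's theorem (normalized form): if `1 ∈ A`, `1 ∈ B` and the only way to
write `1` as a product `a * b` with `a ∈ A`, `b ∈ B` is `1 * 1`, then
`|A| + |B| ≤ |A * B| + 1`.  Auxiliary version with explicit induction bounds. -/
private lemma kemperman_aux :
    ∀ n m : ℕ, ∀ A B : Finset G, (1 : G) ∈ A → (1 : G) ∈ B →
      (∀ a ∈ A, ∀ b ∈ B, a * b = 1 → a = 1) →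
      2 * (A * B).card ≤ n + A.card + B.card → A.card ≤ m →
      A.card + B.card ≤ (A * B).card + 1 := by
  intro n
  induction n using Nat.strong_induction_on with
  | _ n ihn =>
  intro m
  induction m using Nat.strong_induction_on with
  | _ m ihm =>
  intro A B h1A h1B huniq hn hm
  have hAsub : A ⊆ A * B := fun a ha => by
    simpa using mul_mem_mul ha h1B
  have hBsub : B ⊆ A * B := fun b hb => by
    simpa using mul_mem_mul h1A hb
  have haC : A.card ≤ (A * B).card := card_le_card hAsub
  have hbC : B.card ≤ (A * B).card := card_le_card hBsub
  by_cases htriv : ∀ g ∈ A ∩ B, g = 1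
  · -- A ∩ B = {1} : then A ∪ B ⊆ A * B gives the bound directly
    have hinter : A ∩ B = {1} := by
      apply Finset.Subset.antisymm
      · intro x hx; simp [htriv x hx]
      · intro x hx
        simp only [Finset.mem_singleton] at hx
        subst hx
        exact mem_inter.mpr ⟨h1A, h1B⟩
    have hcup : (A ∪ B).card ≤ (A * B).card :=
      card_le_card (union_subset hAsub hBsub)
    have := Finset.card_union_add_card_inter A B
    rw [hinter] at this
    simp only [Finset.card_singleton] at this
    omega
  · push_neg at htriv
    obtain ⟨g, hgAB, hgne⟩ := htriv
    have hgA : g ∈ A := (mem_inter.mp hgAB).1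
    have hgB : g ∈ B := (mem_inter.mp hgAB).2
    have hginvA : g⁻¹ ∉ A := by
      intro h
      have := huniq g⁻¹ h g hgB (inv_mul_cancel g)
      exact hgne (by rwa [inv_eq_one] at this)
    have hginvB : g⁻¹ ∉ B := by
      intro h
      exact hgne (huniq g hgA g⁻¹ h (mul_inv_cancel g))
    set Ag : Finset G := A.image (· * g) with hAg
    set gB : Finset G := B.image (g * ·) with hgBdef
    set D : Finset G := Ag \ A with hD
    set E : Finset G := gB \ B with hE
    have hd1 : 1 ≤ D.card := by
      rcases Finset.eq_empty_or_nonempty D with hDe | hDn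
      · exfalso
        have hsub : ∀ a ∈ A, a * g ∈ A := by
          intro a ha
          have : a * g ∈ Ag := mem_image_of_mem _ ha
          have hsd := Finset.sdiff_eq_empty_iff_subset.mp hDe
          exact hsd this
        exact hginvA (inv_mem_of_mul_right_closed h1A hsub)
      · exact Finset.card_pos.mpr hDn
    have he1 : 1 ≤ E.card := by
      rcases Finset.eq_empty_or_nonempty E with hEe | hEn
      · exfalso
        have hsub : ∀ b ∈ B, g * b ∈ B := by
          intro b hb
          have : g * b ∈ gB := mem_image_of_mem _ hb
          have hsd := Finset.sdiff_eq_empty_iff_subset.mp hEe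
          exact hsd this
        exact hginvB (inv_mem_of_mul_left_closed h1B hsub)
      · exact Finset.card_pos.mpr hEn
    -- the two transformed pairs
    by_cases hde : D.card ≤ E.card
    · -- transform 1 : (A ∩ Ag⁻¹, B ∪ gB)
      set A₁ : Finset G := A ∩ A.image (· * g⁻¹) with hA₁
      set B₁ : Finset G := B ∪ gB with hB₁
      have h1A₁ : (1 : G) ∈ A₁ := by
        refine mem_inter.mpr ⟨h1A, ?_⟩
        exact mem_image.mpr ⟨g, hgA, by simp⟩
      have h1B₁ : (1 : G) ∈ B₁ := mem_union_left _ h1B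
      have hA₁A : A₁ ⊆ A := inter_subset_left
      have huniq₁ : ∀ a ∈ A₁, ∀ b ∈ B₁, a * b = 1 → a = 1 := by
        intro x hx y hy hxy
        rcases mem_union.mp hy with hyB | hygB
        · exact huniq x (hA₁A hx) y hyB hxy
        · obtain ⟨b, hb, rfl⟩ := mem_image.mp hygB
          obtain ⟨a', ha', hxa⟩ := mem_image.mp (mem_inter.mp hx).2
          have hx' : x = a' * g⁻¹ := hxa.symm
          have hab : a' * b = 1 := by
            have : x * (g * b) = a' * b := by
              rw [hx', mul_assoc, inv_mul_cancel_left]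
            rwa [this] at hxy
          have ha1 : a' = 1 := huniq a' ha' b hb hab
          exfalso
          apply hginvA
          have : x = g⁻¹ := by rw [hx', ha1, one_mul]
          rw [← this]
          exact (mem_inter.mp hx).1
      have hmulsub : A₁ * B₁ ⊆ A * B := by
        intro z hz
        obtain ⟨x, hx, y, hy, rfl⟩ := mem_mul.mp hz
        rcases mem_union.mp hy with hyB | hygB
        · exact mul_mem_mul (hA₁A hx) hyB
        · obtain ⟨b, hb, rfl⟩ := mem_image.mp hygB
          obtain ⟨a', ha', hxa⟩ := mem_image.mp (mem_inter.mp hx).2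
          have : x * (g * b) = a' * b := by
            rw [← hxa, mul_assoc, inv_mul_cancel_left]
          rw [this]
          exact mul_mem_mul ha' hb
      have hcard1 : A₁.card + D.card = A.card := by
        have hsd : A \ A₁ = A \ A.image (· * g⁻¹) := by
          rw [hA₁, Finset.sdiff_inter_self_left]
        have himg : (A \ A.image (· * g⁻¹)).image (· * g) = D := by
          rw [Finset.image_sdiff _ _ (mul_left_injective g), Finset.image_image]
          have : ((· * g) ∘ (· * g⁻¹)) = id := by
            funext x; simp
          rw [this, Finset.image_id, hD, hAg]
        have hcD : (A \ A₁).card = D.card := by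
          rw [hsd, ← himg, Finset.card_image_of_injective _ (mul_left_injective g)]
        have := Finset.card_inter_add_card_sdiff A A₁
        rw [Finset.inter_eq_right.mpr hA₁A] at this
        omega
      have hcard2 : B₁.card = B.card + E.card := by
        rw [hB₁, ← Finset.union_sdiff_self_eq_union, ← hE,
          Finset.card_union_of_disjoint Finset.disjoint_sdiff]
      have hc₁ : (A₁ * B₁).card ≤ (A * B).card := card_le_card hmulsub
      have ha₁C : A₁.card ≤ (A₁ * B₁).card :=
        card_le_card (fun a ha => by simpa using mul_mem_mul ha h1B₁)
      have hb₁C : B₁.card ≤ (A₁ * B₁).card :=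
        card_le_card (fun b hb => by simpa using mul_mem_mul h1A₁ hb)
      have hn₁ : 2 * (A₁ * B₁).card ≤ n + A₁.card + B₁.card := by omega
      have hlt : A₁.card < m := by omega
      have := ihm A₁.card hlt A₁ B₁ h1A₁ h1B₁ huniq₁ hn₁ le_rfl
      omega
    · -- transform 2 : (A ∪ Ag, B ∩ g⁻¹B)
      set A₂ : Finset G := A ∪ Ag with hA₂
      set B₂ : Finset G := B ∩ B.image (g⁻¹ * ·) with hB₂
      have h1A₂ : (1 : G) ∈ A₂ := mem_union_left _ h1A
      have h1B₂ : (1 : G) ∈ B₂ := by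
        refine mem_inter.mpr ⟨h1B, ?_⟩
        exact mem_image.mpr ⟨g, hgB, by simp⟩
      have hB₂B : B₂ ⊆ B := inter_subset_left
      have huniq₂ : ∀ a ∈ A₂, ∀ b ∈ B₂, a * b = 1 → a = 1 := by
        intro x hx y hy hxy
        rcases mem_union.mp hx with hxA | hxAg
        · exact huniq x hxA y (hB₂B hy) hxy
        · obtain ⟨a', ha', rfl⟩ := mem_image.mp hxAg
          obtain ⟨b, hb, hyb⟩ := mem_image.mp (mem_inter.mp hy).2
          have hab : a' * b = 1 := by
            have : a' * g * y = a' * b := by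
              rw [← hyb, mul_assoc, mul_inv_cancel_left]
            rwa [this] at hxy
          have ha1 : a' = 1 := huniq a' ha' b hb hab
          exfalso
          apply hginvB
          have hyg : y = g⁻¹ := by
            have : a' * g * y = 1 := hxy
            rw [ha1, one_mul] at this
            exact eq_inv_of_mul_eq_one_right this
          rw [← hyg]
          exact hB₂B hy
      have hmulsub : A₂ * B₂ ⊆ A * B := by
        intro z hz
        obtain ⟨x, hx, y, hy, rfl⟩ := mem_mul.mp hz
        rcases mem_union.mp hx with hxA | hxAg
        · exact mul_mem_mul hxA (hB₂B hy)
        · obtain ⟨a', ha', rfl⟩ := mem_image.mp hxAg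
          obtain ⟨b, hb, hyb⟩ := mem_image.mp (mem_inter.mp hy).2
          have : a' * g * y = a' * b := by
            rw [← hyb, mul_assoc, mul_inv_cancel_left]
          rw [this]
          exact mul_mem_mul ha' hb
      have hcard1 : A₂.card = A.card + D.card := by
        rw [hA₂, ← Finset.union_sdiff_self_eq_union, ← hD,
          Finset.card_union_of_disjoint Finset.disjoint_sdiff]
      have hcard2 : B₂.card + E.card = B.card := by
        have hsd : B \ B₂ = B \ B.image (g⁻¹ * ·) := by
          rw [hB₂, Finset.sdiff_inter_self_left]
        have himg : (B \ B.image (g⁻¹ * ·)).image (g * ·) = E := by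
          rw [Finset.image_sdiff _ _ (mul_right_injective g), Finset.image_image]
          have : ((g * ·) ∘ (g⁻¹ * ·)) = id := by
            funext x; simp
          rw [this, Finset.image_id, hE, hgBdef]
        have hcE : (B \ B₂).card = E.card := by
          rw [hsd, ← himg, Finset.card_image_of_injective _ (mul_right_injective g)]
        have := Finset.card_inter_add_card_sdiff B B₂
        rw [Finset.inter_eq_right.mpr hB₂B] at this
        omega
      have hc₂ : (A₂ * B₂).card ≤ (A * B).card := card_le_card hmulsub
      have ha₂C : A₂.card ≤ (A₂ * B₂).card :=
        card_le_card (fun a ha => by simpa using mul_mem_mul ha h1B₂)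
      have hb₂C : B₂.card ≤ (A₂ * B₂).card :=
        card_le_card (fun b hb => by simpa using mul_mem_mul h1A₂ hb)
      have hnpos : 1 ≤ n := by omega
      have hn₂ : 2 * (A₂ * B₂).card ≤ (n - 1) + A₂.card + B₂.card := by omega
      have := ihn (n - 1) (by omega) A₂.card A₂ B₂ h1A₂ h1B₂ huniq₂ hn₂ le_rfl
      omega

/-- Kemperman's theorem, normalized form. -/
private lemma kemperman (A B : Finset G) (h1A : (1 : G) ∈ A) (h1B : (1 : G) ∈ B)
    (huniq : ∀ a ∈ A, ∀ b ∈ B, a * b = 1 → a = 1) :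
    A.card + B.card ≤ (A * B).card + 1 :=
  kemperman_aux (2 * (A * B).card) A.card A B h1A h1B huniq (by omega) le_rfl

end Kemperman

/-- For a nonempty finite subset `B` of a group `G`, there is a matching from `B`
to itself iff `1 ∉ B`. -/
theorem automatching_iff {G : Type*} [Group G] (B : Finset G) (hB : B.Nonempty) :
    (∃ f : G → G, IsGroupMatching B B f) ↔ (1 : G) ∉ B := by
  classical
  constructor
  · rintro ⟨f, hbij, hmatch⟩ h1B
    have hmem := hmatch 1 h1B
    rw [one_mul] at hmem
    exact hmem (by exact_mod_cast hbij.mapsTo (by exact_mod_cast h1B))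
  · intro h1B
    -- Hall's condition via Kemperman's theorem
    set t : {x // x ∈ B} → Finset G := fun a => B.filter (fun c => (a : G) * c ∉ B) with ht
    have hall : ∀ s : Finset {x // x ∈ B}, s.card ≤ (s.biUnion t).card := by
      intro s
      set S : Finset G := s.image Subtype.val with hS
      have hScard : S.card = s.card := by
        rw [hS]; exact Finset.card_image_of_injective s Subtype.val_injective
      set N : Finset G := s.biUnion t with hN
      have hNB : N ⊆ B := by
        intro x hx
        rw [hN] at hx
        obtain ⟨a, _, hxa⟩ := Finset.mem_biUnion.mp hx
        exact (Finset.mem_filter.mp hxa).1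
      set T : Finset G := B \ N with hT
      have hSB : S ⊆ B := by
        intro x hx
        rw [hS] at hx
        obtain ⟨a, _, rfl⟩ := Finset.mem_image.mp hx
        exact a.2
      have hprod : ∀ a ∈ S, ∀ c ∈ T, a * c ∈ B := by
        intro a ha c hc
        by_contra hnot
        rw [hS] at ha
        rw [hT] at hc
        obtain ⟨x, hx, rfl⟩ := Finset.mem_image.mp ha
        have hcB : c ∈ B := (Finset.mem_sdiff.mp hc).1
        have hcN : c ∈ N := by
          rw [hN]
          exact Finset.mem_biUnion.mpr ⟨x, hx, Finset.mem_filter.mpr ⟨hcB, hnot⟩⟩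
        exact (Finset.mem_sdiff.mp hc).2 hcN
      have hkem := kemperman (insert (1 : G) S) (insert (1 : G) T)
        (Finset.mem_insert_self _ _) (Finset.mem_insert_self _ _) ?_
      · have hprodsub : insert (1 : G) S * insert (1 : G) T ⊆ insert (1 : G) B := by
          intro z hz
          obtain ⟨a, ha, b, hb, rfl⟩ := Finset.mem_mul.mp hz
          rcases Finset.mem_insert.mp ha with rfl | haS
          · rcases Finset.mem_insert.mp hb with rfl | hbT
            · simp
            · rw [one_mul]
              rw [hT] at hbT
              exact Finset.mem_insert_of_mem ((Finset.mem_sdiff.mp hbT).1)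
          · rcases Finset.mem_insert.mp hb with rfl | hbT
            · rw [mul_one]
              exact Finset.mem_insert_of_mem (hSB haS)
            · exact Finset.mem_insert_of_mem (hprod a haS b hbT)
        have hcs : (insert (1 : G) S * insert (1 : G) T).card ≤ B.card + 1 :=
          le_trans (Finset.card_le_card hprodsub) (Finset.card_insert_le _ _)
        have h1S : (1 : G) ∉ S := fun h => h1B (hSB h)
        have h1T : (1 : G) ∉ T := fun h => h1B ((Finset.mem_sdiff.mp h).1)
        rw [Finset.card_insert_of_notMem h1S, Finset.card_insert_of_notMem h1T] at hkem
        have hTcard : T.card = B.card - N.card := Finset.card_sdiff_of_subset hNB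
        have hNle : N.card ≤ B.card := Finset.card_le_card hNB
        omega
      · intro a ha b hb hab
        rcases Finset.mem_insert.mp ha with rfl | haS
        · rfl
        · rcases Finset.mem_insert.mp hb with rfl | hbT
          · rwa [mul_one] at hab
          · exfalso
            apply h1B
            rw [← hab]
            exact hprod a haS b hbT
    obtain ⟨f, hfinj, hfmem⟩ :=
      (Finset.all_card_le_biUnion_card_iff_exists_injective t).mp hall
    set F : G → G := fun x => if h : x ∈ B then f ⟨x, h⟩ else 1 with hF
    have hFval : ∀ x (h : x ∈ B), F x = f ⟨x, h⟩ := by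
      intro x h; simp [hF, h]
    have hmapsto : ∀ a ∈ B, F a ∈ B := by
      intro a ha
      rw [hFval a ha]
      exact (Finset.mem_filter.mp (hfmem ⟨a, ha⟩)).1
    have hinjOn : Set.InjOn F (B : Set G) := by
      intro x hx y hy hxy
      have hx' : x ∈ B := by exact_mod_cast hx
      have hy' : y ∈ B := by exact_mod_cast hy
      rw [hFval x hx', hFval y hy'] at hxy
      have := hfinj hxy
      exact congrArg Subtype.val this
    have himage : B.image F = B := by
      apply Finset.eq_of_subset_of_card_le
      · intro y hy
        obtain ⟨x, hx, rfl⟩ := Finset.mem_image.mp hy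
        exact hmapsto x hx
      · rw [Finset.card_image_of_injOn hinjOn]
    refine ⟨F, ⟨?_, hinjOn, ?_⟩, ?_⟩
    · intro x hx
      have hx' : x ∈ B := by exact_mod_cast hx
      exact_mod_cast hmapsto x hx'
    · intro y hy
      have hy' : y ∈ B := by exact_mod_cast hy
      rw [← himage] at hy'
      obtain ⟨x, hx, hxy⟩ := Finset.mem_image.mp hy'
      exact ⟨x, by exact_mod_cast hx, hxy⟩
    · intro a ha
      rw [hFval a ha]
      exact (Finset.mem_filter.mp (hfmem ⟨a, ha⟩)).2
end

section
/- Let A, B be n-dimensional K-subspaces of L and let 𝒜 = {a₁,…,aₙ} be a basis of A. Then 𝒜 can be matched to some basis of B if and only if for every subset J ⊆ {1,…,n} one has dim_K ⋂_{i∈J} (a_i⁻¹A ∩ B) ≤ n − |J|. -/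
open Module Submodule Set

section Rado
variable {K W : Type*} [Field K] [AddCommGroup W] [Module K W]

lemma biSup_update_of_mem {n : ℕ} (U : Fin n → Submodule K W)
    {i₀ : Fin n} {J : Finset (Fin n)} (h : i₀ ∈ J) (H : Submodule K W) :
    (⨆ i ∈ J, Function.update U i₀ H i) = H ⊔ ⨆ i ∈ J.erase i₀, U i := by
  classical
  conv_lhs => rw [← Finset.insert_erase h, Finset.iSup_insert]
  refine congrArg₂ (· ⊔ ·) (by simp) ?_
  exact iSup_congr fun i => iSup_congr fun hi => by
    rw [Function.update_of_ne (Finset.ne_of_mem_erase hi)]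

lemma rado_base [FiniteDimensional K W] {n : ℕ} (U : Fin n → Submodule K W)
    (hall : ∀ J : Finset (Fin n), J.card ≤ finrank K ↥(⨆ i ∈ J, U i))
    (h1 : ∀ i, finrank K (U i) ≤ 1) :
    ∃ f : Fin n → W, LinearIndependent K f ∧ ∀ i, f i ∈ U i := by
  have hone : ∀ i, finrank K (U i) = 1 := by
    intro i
    refine le_antisymm (h1 i) ?_
    have := hall {i}
    simpa using this
  have hv : ∀ i : Fin n, ∃ v : W, v ∈ U i ∧ U i = span K {v} := by
    intro i
    have hbot : U i ≠ ⊥ := by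
      intro h
      have := hone i
      rw [h] at this
      simpa using this
    obtain ⟨v, hvU, hv0⟩ := Submodule.exists_mem_ne_zero_of_ne_bot hbot
    refine ⟨v, hvU, ?_⟩
    refine (Submodule.eq_of_le_of_finrank_eq ((span_singleton_le_iff_mem _ _).mpr hvU) ?_).symm
    rw [finrank_span_singleton hv0, hone]
  choose v hvU hUv using hv
  refine ⟨v, ?_, hvU⟩
  rw [linearIndependent_iff_card_le_finrank_span]
  have hsup : span K (Set.range v) = ⨆ i, U i := by
    rw [span_range_eq_iSup]
    exact iSup_congr fun i => (hUv i).symm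
  have h2 := hall Finset.univ
  have h3 : (⨆ i ∈ Finset.univ, U i) = ⨆ i, U i := by simp
  rw [h3] at h2
  simp only [Finset.card_univ, Fintype.card_fin] at h2
  rw [Set.finrank, hsup, Fintype.card_fin]
  exact h2

lemma rado_aux [FiniteDimensional K W] (m : ℕ) {n : ℕ} (U : Fin n → Submodule K W)
    (hm : ∑ i, finrank K (U i) ≤ m)
    (hall : ∀ J : Finset (Fin n), J.card ≤ finrank K ↥(⨆ i ∈ J, U i)) :
    ∃ f : Fin n → W, LinearIndependent K f ∧ ∀ i, f i ∈ U i := by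
  classical
  induction m generalizing U with
  | zero =>
    refine rado_base U hall fun i => ?_
    have : finrank K (U i) = 0 := by
      have h3 : finrank K (U i) ≤ ∑ j, finrank K (U j) := by
        simpa using Finset.single_le_sum (f := fun i => finrank K (U i))
          (fun i _ => Nat.zero_le _) (Finset.mem_univ i)
      omega
    omega
  | succ m ih =>
    by_cases hsmall : ∀ i, finrank K (U i) ≤ 1
    · exact rado_base U hall hsmall
    push_neg at hsmall
    obtain ⟨i₀, hi₀⟩ := hsmall
    -- find a codim-1 subspace H of U i₀ preserving the Hall condition
    have key : ∃ H : Submodule K W, H ≤ U i₀ ∧ finrank K H + 1 = finrank K (U i₀) ∧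
        ∀ J : Finset (Fin n), J.card ≤ finrank K ↥(⨆ i ∈ J, Function.update U i₀ H i) := by
      by_contra hcon
      push_neg at hcon
      set d := finrank K (U i₀) with hd
      let e : Basis (Fin d) K ↥(U i₀) := Module.finBasis K ↥(U i₀)
      have hd2 : 2 ≤ d := hi₀
      let j0 : Fin d := ⟨0, by omega⟩
      let j1 : Fin d := ⟨1, by omega⟩
      have hj01 : j0 ≠ j1 := by simp [j0, j1, Fin.ext_iff]
      let Hyp : Fin d → Submodule K W := fun j =>
        Submodule.map (U i₀).subtype (span K ((fun k => (e k : ↥(U i₀))) '' {k | k ≠ j}))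
      have hHle : ∀ j, Hyp j ≤ U i₀ := fun j => Submodule.map_subtype_le _ _
      have hHrk : ∀ j, finrank K (Hyp j) + 1 = d := by
        intro j
        have h1 : finrank K (Hyp j) =
            finrank K (span K ((fun k => (e k : ↥(U i₀))) '' {k | k ≠ j})) :=
          Submodule.finrank_map_subtype_eq _ _
        have hli : LinearIndependent K (fun x : {k : Fin d // k ≠ j} => e x.val) :=
          e.linearIndependent.comp _ Subtype.val_injective
        have hrange : Set.range (fun x : {k : Fin d // k ≠ j} => e x.val)
            = (fun k => (e k : ↥(U i₀))) '' {k | k ≠ j} := by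
          ext x
          simp [Set.mem_image, Set.mem_range, Subtype.exists]
        have h2 := finrank_span_eq_card hli
        rw [hrange] at h2
        have hcard : Fintype.card {k : Fin d // k ≠ j} = d - 1 := by
          simp [Fintype.card_subtype_compl, Fintype.card_fin]
        rw [h1, h2, hcard]
        omega
      have hHsup : Hyp j0 ⊔ Hyp j1 = U i₀ := by
        have h1 : span K ((fun k => (e k : ↥(U i₀))) '' {k | k ≠ j0})
            ⊔ span K ((fun k => (e k : ↥(U i₀))) '' {k | k ≠ j1}) = ⊤ := by
          rw [← Submodule.span_union, ← Set.image_union]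
          have : ({k | k ≠ j0} ∪ {k | k ≠ j1} : Set (Fin d)) = Set.univ := by
            ext k
            by_cases h : k = j0 <;> simp [h, hj01]
          rw [this, Set.image_univ, e.span_eq]
        rw [show Hyp j0 ⊔ Hyp j1 = Submodule.map (U i₀).subtype
            (span K ((fun k => (e k : ↥(U i₀))) '' {k | k ≠ j0})
              ⊔ span K ((fun k => (e k : ↥(U i₀))) '' {k | k ≠ j1}))
          from (Submodule.map_sup _ _ _).symm, h1, Submodule.map_top,
          Submodule.range_subtype]
      obtain ⟨J0, hJ0⟩ := hcon (Hyp j0) (hHle j0) (hHrk j0)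
      obtain ⟨J1, hJ1⟩ := hcon (Hyp j1) (hHle j1) (hHrk j1)
      have hmem : ∀ (H : Submodule K W) (J : Finset (Fin n)),
          finrank K ↥(⨆ i ∈ J, Function.update U i₀ H i) < J.card → i₀ ∈ J := by
        intro H J hJ
        by_contra hni
        have heq : (⨆ i ∈ J, Function.update U i₀ H i) = ⨆ i ∈ J, U i :=
          iSup_congr fun i => iSup_congr fun hi => by
            rw [Function.update_of_ne (fun h => hni (by rwa [h] at hi))]
        rw [heq] at hJ
        exact absurd (hall J) (not_le.mpr hJ)
      have hm0 : i₀ ∈ J0 := hmem _ _ hJ0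
      have hm1 : i₀ ∈ J1 := hmem _ _ hJ1
      set J0' := J0.erase i₀ with hJ0'
      set J1' := J1.erase i₀ with hJ1'
      rw [biSup_update_of_mem U hm0 (Hyp j0)] at hJ0
      rw [biSup_update_of_mem U hm1 (Hyp j1)] at hJ1
      set X := Hyp j0 ⊔ ⨆ i ∈ J0', U i with hX
      set Y := Hyp j1 ⊔ ⨆ i ∈ J1', U i with hY
      have hXc : finrank K X ≤ J0'.card := by
        have hc : J0'.card + 1 = J0.card := by rw [hJ0']; exact Finset.card_erase_add_one hm0
        omega
      have hYc : finrank K Y ≤ J1'.card := by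
        have hc : J1'.card + 1 = J1.card := by rw [hJ1']; exact Finset.card_erase_add_one hm1
        omega
      have hsub := Submodule.finrank_sup_add_finrank_inf_eq X Y
      have hsupXY : X ⊔ Y = ⨆ i ∈ insert i₀ (J0' ∪ J1'), U i := by
        rw [Finset.iSup_insert, Finset.iSup_union, hX, hY, sup_sup_sup_comm, hHsup]
      have hinfXY : (⨆ i ∈ J0' ∩ J1', U i) ≤ X ⊓ Y := by
        refine le_inf ?_ ?_
        · exact le_trans (biSup_mono fun i hi => Finset.mem_of_mem_inter_left hi) le_sup_right
        · exact le_trans (biSup_mono fun i hi => Finset.mem_of_mem_inter_right hi) le_sup_right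
      have h1 : (insert i₀ (J0' ∪ J1')).card ≤ finrank K ↥(X ⊔ Y) := by
        rw [hsupXY]; exact hall _
      have h2 : (J0' ∩ J1').card ≤ finrank K ↥(X ⊓ Y) :=
        le_trans (hall _) (Submodule.finrank_mono hinfXY)
      have h3 : (insert i₀ (J0' ∪ J1')).card = (J0' ∪ J1').card + 1 :=
        Finset.card_insert_of_notMem (by
          simp [J0', J1', Finset.mem_union, Finset.notMem_erase])
      have h4 := Finset.card_union_add_card_inter J0' J1'
      omega
    obtain ⟨H, hle, hrk, hallH⟩ := key
    obtain ⟨f, hf, hfU⟩ := ih (Function.update U i₀ H) (by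
      have h1 : ∑ i, finrank K (Function.update U i₀ H i)
          = finrank K H + ∑ i ∈ Finset.univ.erase i₀, finrank K (U i) := by
        rw [Finset.sum_congr rfl fun i _ =>
          (Function.apply_update (fun (_ : Fin n) (s : Submodule K W) => finrank K ↥s) U i₀ H i),
          Finset.sum_update_of_mem (Finset.mem_univ i₀), Finset.erase_eq]
      have h2 : ∑ i, finrank K (U i)
          = finrank K (U i₀) + ∑ i ∈ Finset.univ.erase i₀, finrank K (U i) := by
        rw [← Finset.add_sum_erase _ _ (Finset.mem_univ i₀)]
      omega) hallH
    refine ⟨f, hf, fun i => ?_⟩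
    by_cases hii : i = i₀
    · subst hii
      have := hfU i
      rw [Function.update_self] at this
      exact hle this
    · have := hfU i
      rwa [Function.update_of_ne hii] at this

end Rado

section Abstract
variable {K W : Type*} [Field K] [AddCommGroup W] [Module K W] [FiniteDimensional K W]

lemma finrank_dualAnnihilator (p : Submodule K W) :
    finrank K p.dualAnnihilator = finrank K W - finrank K p := by
  have h1 : finrank K (W ⧸ p) = finrank K p.dualAnnihilator :=
    LinearEquiv.finrank_eq (Subspace.quotEquivAnnihilator p)
  have h2 := Submodule.finrank_quotient_add_finrank p
  omega

lemma finrank_span_basis_image (b : Basis (Fin n) K W) (s : Set (Fin n)) [DecidablePred (· ∈ s)] :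
    finrank K ↥(span K (⇑b '' s)) = Fintype.card s := by
  have hli : LinearIndependent K (fun x : s => b x.val) :=
    b.linearIndependent.comp _ Subtype.val_injective
  have hrange : Set.range (fun x : s => b x.val) = ⇑b '' s := by
    ext x; simp [Set.mem_image, Set.mem_range, Subtype.exists]
  have := finrank_span_eq_card hli
  rwa [hrange] at this

lemma matchable_abstract {n : ℕ} (hW : finrank K W = n) (V : Fin n → Submodule K W) :
    (∃ b : Basis (Fin n) K W, ∀ i, V i ≤ span K (⇑b '' {j | j ≠ i})) ↔
      ∀ J : Finset (Fin n), finrank K ↥(⨅ i ∈ J, V i) ≤ n - J.card := by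
  classical
  constructor
  · rintro ⟨b, hb⟩ J
    have hle : (⨅ i ∈ J, V i) ≤ span K (⇑b '' ↑(Jᶜ)) := by
      intro x hx
      simp only [Submodule.mem_iInf] at hx
      rw [Basis.mem_span_image]
      intro j hj
      simp only [Finset.coe_compl, Set.mem_compl_iff, Finset.mem_coe]
      intro hjJ
      have hxV : x ∈ V j := hx j hjJ
      have := (Basis.mem_span_image b).mp (hb j hxV) hj
      exact this rfl
    have hrk : finrank K ↥(span K (⇑b '' ↑(Jᶜ))) = n - J.card := by
      rw [finrank_span_basis_image b ↑(Jᶜ), ← Set.toFinset_card, Finset.toFinset_coe,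
        Finset.card_compl, Fintype.card_fin]
    calc finrank K ↥(⨅ i ∈ J, V i) ≤ finrank K ↥(span K (⇑b '' ↑(Jᶜ))) :=
          Submodule.finrank_mono hle
      _ = n - J.card := hrk
  · intro hdim
    rcases Nat.eq_zero_or_pos n with hn | hn
    · subst hn
      exact ⟨Module.finBasisOfFinrankEq K W hW, fun i => i.elim0⟩
    have : Nonempty (Fin n) := ⟨⟨0, hn⟩⟩
    set U : Fin n → Submodule K (Module.Dual K W) := fun i => (V i).dualAnnihilator with hU
    have hall : ∀ J : Finset (Fin n), J.card ≤ finrank K ↥(⨆ i ∈ J, U i) := by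
      intro J
      have h1 : (⨆ i ∈ J, U i) = (⨅ i ∈ J, V i).dualAnnihilator := by
        rw [show (⨅ i ∈ J, V i) = ⨅ i : {i // i ∈ J}, V i from (iInf_subtype'' _ _).symm,
          Subspace.dualAnnihilator_iInf_eq,
          show (⨆ i ∈ J, U i) = ⨆ i : {i // i ∈ J}, U i from (iSup_subtype'' _ _).symm]
      rw [h1, finrank_dualAnnihilator, hW]
      have h2 := hdim J
      have h3 : J.card ≤ n := by
        have := Finset.card_le_univ J
        simpa using this
      omega
    obtain ⟨f, hf, hfU⟩ := rado_aux (∑ i, finrank K (U i)) U le_rfl hall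
    have hcard : Fintype.card (Fin n) = finrank K (Module.Dual K W) := by
      rw [Subspace.dual_finrank_eq, hW, Fintype.card_fin]
    let F : Basis (Fin n) K (Module.Dual K W) :=
      basisOfLinearIndependentOfCardEqFinrank hf hcard
    have hF : ∀ i, F i = f i := fun i =>
      congrFun (coe_basisOfLinearIndependentOfCardEqFinrank hf hcard) i
    let b : Basis (Fin n) K W := F.dualBasis.map (Module.evalEquiv K W).symm
    refine ⟨b, fun i x hx => ?_⟩
    rw [Basis.mem_span_image]
    intro j hj
    simp only [Set.mem_setOf_eq]
    intro hji
    subst hji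
    have hrepr : b.repr x j = (Module.evalEquiv K W x) (F j) := by
      simp [b, Basis.map_repr]
    rw [hF j] at hrepr
    have hzero : f j x = 0 := by
      have := hfU j
      rw [hU] at this
      exact (Submodule.mem_dualAnnihilator _).mp this x hx
    have : b.repr x j = 0 := by
      rw [hrepr]
      simpa using hzero
    exact (Finsupp.mem_support_iff.mp hj) this

end Abstract

section Main
variable {K L : Type*} [Field K] [DivisionRing L] [Algebra K L]

-- helper: membership transfer between span in B and span in L
lemma mem_span_map_subtype {M : Type*} [AddCommGroup M] [Module K M] (B : Submodule K M)
    (c : Fin n → ↥B) (s : Set (Fin n)) (y : ↥B) :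
    y ∈ span K (c '' s) ↔ (y : M) ∈ span K ((fun j => (c j : M)) '' s) := by
  have himg : (fun j => (c j : M)) '' s = B.subtype '' (c '' s) := by
    rw [Set.image_image]; rfl
  rw [himg, ← Submodule.map_span]
  constructor
  · intro h; exact Submodule.mem_map_of_mem h
  · intro h
    obtain ⟨z, hz, hzy⟩ := h
    have : z = y := Subtype.ext hzy
    rwa [← this]

end Main

/-- The family `a : Fin n → L` is a basis of the `K`-subspace `A` of `L`. -/
def IsLinBasis (K : Type*) {L : Type*} [Field K] [DivisionRing L] [Algebra K L]
    {n : ℕ} (a : Fin n → L) (A : Submodule K L) : Prop :=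
  LinearIndependent K a ∧ Submodule.span K (Set.range a) = A

/-- The basis `a` of `A` is matched to the basis `b` of `B`: for every `i` and every
`x ∈ B`, if `a i * x ∈ A` then `x` lies in the span of `{b j : j ≠ i}`. -/
def MatchedBases (K : Type*) {L : Type*} [Field K] [DivisionRing L] [Algebra K L]
    {n : ℕ} (a b : Fin n → L) (A B : Submodule K L) : Prop :=
  ∀ i : Fin n, ∀ x ∈ B, a i * x ∈ A → x ∈ Submodule.span K (b '' {j | j ≠ i})

/-- A basis `a` of the `n`-dimensional subspace `A` can be matched to some basis of the
`n`-dimensional subspace `B` iff for every `J ⊆ {1,…,n}` one has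
`dim ⋂_{i ∈ J} (aᵢ⁻¹A ∩ B) ≤ n - |J|`, where `aᵢ⁻¹A ∩ B = {x ∈ B : aᵢ x ∈ A}`. -/
theorem matchable_iff_dim {K L : Type*} [Field K] [DivisionRing L] [Algebra K L]
    {n : ℕ} (A B : Submodule K L) [FiniteDimensional K B]
    (hB : Module.finrank K B = n) (a : Fin n → L) (hA : IsLinBasis K a A) :
    (∃ b : Fin n → L, IsLinBasis K b B ∧ MatchedBases K a b A B) ↔
      ∀ J : Finset (Fin n),
        Module.finrank K
          ↥(B ⊓ ⨅ i ∈ J, A.comap (LinearMap.mulLeft K (a i))) ≤ n - J.card := by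
  classical
  set V : Fin n → Submodule K ↥B :=
    fun i => (A.comap (LinearMap.mulLeft K (a i))).comap B.subtype with hV
  -- finrank transfer
  have hfr : ∀ J : Finset (Fin n),
      finrank K ↥(B ⊓ ⨅ i ∈ J, A.comap (LinearMap.mulLeft K (a i)))
        = finrank K ↥(⨅ i ∈ J, V i) := by
    intro J
    have hle : (B ⊓ ⨅ i ∈ J, A.comap (LinearMap.mulLeft K (a i))) ≤ B := inf_le_left
    have hcomap : Submodule.comap B.subtype
        (B ⊓ ⨅ i ∈ J, A.comap (LinearMap.mulLeft K (a i))) = ⨅ i ∈ J, V i := by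
      rw [Submodule.comap_inf, Submodule.comap_subtype_self, top_inf_eq,
        Submodule.comap_iInf]
      exact iInf_congr fun i => Submodule.comap_iInf _ _
    rw [← hcomap]
    exact (LinearEquiv.finrank_eq (Submodule.comapSubtypeEquivOfLe hle)).symm
  -- membership transfer for V
  have hVmem : ∀ (i : Fin n) (y : ↥B), y ∈ V i ↔ a i * (y : L) ∈ A := by
    intro i y
    simp [hV, Submodule.mem_comap, LinearMap.mulLeft_apply]
  rw [show (∀ J : Finset (Fin n), Module.finrank K
        ↥(B ⊓ ⨅ i ∈ J, A.comap (LinearMap.mulLeft K (a i))) ≤ n - J.card)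
      ↔ (∀ J : Finset (Fin n), finrank K ↥(⨅ i ∈ J, V i) ≤ n - J.card) from
    forall_congr' fun J => by rw [hfr J]]
  rw [← matchable_abstract hB V]
  constructor
  · rintro ⟨b, ⟨hbli, hbsp⟩, hmatch⟩
    have hmem : ∀ j, b j ∈ B := fun j => by
      rw [← hbsp]; exact Submodule.subset_span (Set.mem_range_self j)
    set bb' : Fin n → ↥B := fun j => ⟨b j, hmem j⟩ with hbb'
    have hcomp : b = B.subtype ∘ bb' := rfl
    have hli : LinearIndependent K bb' := by
      apply LinearIndependent.of_comp B.subtype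
      rw [← hcomp]; exact hbli
    have hsp : ⊤ ≤ span K (Set.range bb') := by
      have hmap : Submodule.map B.subtype (span K (Set.range bb')) = B := by
        rw [Submodule.map_span, ← Set.range_comp, ← hcomp, hbsp]
      intro y _
      have : (y : L) ∈ Submodule.map B.subtype (span K (Set.range bb')) := by
        rw [hmap]; exact y.2
      obtain ⟨z, hz, hzy⟩ := this
      have : z = y := Subtype.ext hzy
      rwa [← this]
    set bb : Basis (Fin n) K ↥B := Basis.mk hli hsp with hbbdef
    refine ⟨bb, fun i y hy => ?_⟩
    have hxy : (y : L) ∈ span K (b '' {j | j ≠ i}) :=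
      hmatch i (y : L) y.2 ((hVmem i y).mp hy)
    rw [mem_span_map_subtype B bb _ y]
    have hcoe : (fun j => ((bb j : ↥B) : L)) = b := by
      funext j
      rw [hbbdef, Basis.mk_apply]
    rw [hcoe]
    exact hxy
  · rintro ⟨bb, hbb⟩
    set b : Fin n → L := fun j => ((bb j : ↥B) : L) with hbdef
    refine ⟨b, ⟨?_, ?_⟩, ?_⟩
    · have : b = B.subtype ∘ bb := rfl
      rw [this]
      exact bb.linearIndependent.map' B.subtype (Submodule.ker_subtype B)
    · have : Set.range b = B.subtype '' Set.range bb := by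
        rw [← Set.range_comp]; rfl
      rw [this, ← Submodule.map_span, bb.span_eq, Submodule.map_top,
        Submodule.range_subtype]
    · intro i x hx hax
      have hyV : (⟨x, hx⟩ : ↥B) ∈ V i := (hVmem i ⟨x, hx⟩).mpr hax
      have := hbb i hyV
      rw [mem_span_map_subtype B bb _ _] at this
      exact this
end

section
/- Let F be a finite set, let F₁,…,Fₙ be subsets of F, and let M be a matroid on F with rank function r. Then there exists a transversal of the family {F₁,…,Fₙ} that is an independent set of M (i.e., an injective choice function i ↦ x_i with x_i ∈ F_i for all i and {x₁,…,xₙ} independent in M) if and only if r(⋃_{i∈J} F_i) ≥ |J| for every subset J ⊆ {1,…,n}. -/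
/-- The rank function of a matroid `M`: the rank of a set `S` is the maximal size of an
independent subset of `S`. -/
noncomputable def matroidRank {α : Type*} (M : Matroid α) (S : Set α) : ℕ :=
  sSup (Set.ncard '' {I : Set α | I ⊆ S ∧ M.Indep I})

section RankLemmas

variable {α : Type*} [Fintype α] {M : Matroid α} {S T X Y I J : Set α}

lemma mr_bddAbove (M : Matroid α) (S : Set α) :
    BddAbove (Set.ncard '' {I : Set α | I ⊆ S ∧ M.Indep I}) := by
  refine ⟨Fintype.card α, ?_⟩
  rintro _ ⟨I, -, rfl⟩
  simpa [Set.ncard_univ] using Set.ncard_le_ncard (Set.subset_univ I) Set.finite_univ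

lemma mr_ge (hI : M.Indep I) (hIS : I ⊆ S) : I.ncard ≤ matroidRank M S :=
  le_csSup (mr_bddAbove M S) ⟨I, ⟨hIS, hI⟩, rfl⟩

lemma mr_le {k : ℕ} (h : ∀ I, M.Indep I → I ⊆ S → I.ncard ≤ k) : matroidRank M S ≤ k := by
  refine csSup_le ⟨0, ∅, ⟨Set.empty_subset _, M.empty_indep⟩, by simp⟩ ?_
  rintro _ ⟨I, ⟨h1, h2⟩, rfl⟩
  exact h I h2 h1

lemma mr_basis (hI : M.IsBasis I S) : matroidRank M S = I.ncard := by
  refine le_antisymm (mr_le fun J hJ hJS => ?_) (mr_ge hI.indep hI.subset)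
  by_contra hlt
  push_neg at hlt
  have hlt' : I.encard < J.encard := by
    rwa [← I.toFinite.cast_ncard_eq, ← J.toFinite.cast_ncard_eq, Nat.cast_lt]
  obtain ⟨e, heJI, hins⟩ := hI.indep.augment hJ hlt'
  exact heJI.2 (hI.mem_of_insert_indep (hJS heJI.1) hins)

lemma mr_le_ncard : matroidRank M S ≤ S.ncard :=
  mr_le fun I _ hIS => Set.ncard_le_ncard hIS S.toFinite

lemma mr_mono (h : S ⊆ T) : matroidRank M S ≤ matroidRank M T :=
  mr_le fun I hI hIS => mr_ge hI (hIS.trans h)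

lemma mr_indep (hE : M.E = Set.univ) (h : matroidRank M S = S.ncard) : M.Indep S := by
  obtain ⟨I, hI⟩ := M.exists_isBasis S (by rw [hE]; exact Set.subset_univ S)
  have : S.ncard ≤ I.ncard := by rw [← h, mr_basis hI]
  rw [← Set.eq_of_subset_of_ncard_le hI.subset this S.toFinite]
  exact hI.indep

lemma mr_submod (hE : M.E = Set.univ) (X Y : Set α) :
    matroidRank M (X ∪ Y) + matroidRank M (X ∩ Y) ≤ matroidRank M X + matroidRank M Y := by
  obtain ⟨I, hI⟩ := M.exists_isBasis (X ∩ Y) (by rw [hE]; exact Set.subset_univ _)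
  obtain ⟨J, hJ, hJI⟩ := hI.exists_isBasis_inter_eq_of_superset
    (Set.inter_subset_left.trans Set.subset_union_left) (by rw [hE]; exact Set.subset_univ _)
  rw [mr_basis hI, mr_basis hJ, ← hJI]
  have h1 : (J ∩ X).ncard ≤ matroidRank M X :=
    mr_ge (hJ.indep.subset Set.inter_subset_left) Set.inter_subset_right
  have h2 : (J ∩ Y).ncard ≤ matroidRank M Y :=
    mr_ge (hJ.indep.subset Set.inter_subset_left) Set.inter_subset_right
  have key : (J ∩ X).ncard + (J ∩ Y).ncard = J.ncard + (J ∩ (X ∩ Y)).ncard := by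
    rw [← Set.ncard_union_add_ncard_inter (J ∩ X) (J ∩ Y), ← Set.inter_union_distrib_left,
      Set.inter_eq_self_of_subset_left hJ.subset, ← Set.inter_inter_distrib_left]
  omega

end RankLemmas

section Rado

variable {α : Type*} [Fintype α] {M : Matroid α}

lemma rado_aux_s6 (M : Matroid α) (hE : M.E = Set.univ) :
    ∀ (m : ℕ) {n : ℕ} (F : Fin n → Set α), (∑ i, (F i).ncard) ≤ m →
      (∀ J : Finset (Fin n), J.card ≤ matroidRank M (⋃ i ∈ J, F i)) →
      ∃ x : Fin n → α, Function.Injective x ∧ (∀ i, x i ∈ F i) ∧ M.Indep (Set.range x) := by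
  classical
  have hone : ∀ {n : ℕ} (F : Fin n → Set α),
      (∀ J : Finset (Fin n), J.card ≤ matroidRank M (⋃ i ∈ J, F i)) →
      ∀ i, 1 ≤ (F i).ncard := by
    intro n F hrado i
    have h := hrado {i}
    simp only [Finset.card_singleton, Finset.mem_singleton, Set.iUnion_iUnion_eq_left] at h
    exact h.trans mr_le_ncard
  intro m
  induction m with
  | zero =>
    intro n F hsum hrado
    rcases Nat.eq_zero_or_pos n with rfl | hn
    · refine ⟨Fin.elim0, fun a => a.elim0, fun i => i.elim0, ?_⟩
      rw [Set.range_eq_empty]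
      exact M.empty_indep
    · exfalso
      have h1 := hone F hrado ⟨0, hn⟩
      have h2 : (F ⟨0, hn⟩).ncard = 0 :=
        Finset.sum_eq_zero_iff.mp (Nat.le_zero.mp hsum) _ (Finset.mem_univ _)
      omega
  | succ m ih =>
    intro n F hsum hrado
    by_cases hsing : ∀ i, (F i).ncard ≤ 1
    · have hex : ∀ i, ∃ a, F i = {a} := fun i =>
        Set.ncard_eq_one.mp (le_antisymm (hsing i) (hone F hrado i))
      choose x hx using hex
      have hrange : (⋃ i ∈ (Finset.univ : Finset (Fin n)), F i) = Set.range x := by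
        ext e; simp [hx, eq_comm]
      have h1 : n ≤ matroidRank M (Set.range x) := by
        have := hrado Finset.univ
        rwa [hrange, Finset.card_univ, Fintype.card_fin] at this
      have hrfin : Set.range x = ↑(Finset.univ.image x) := by simp
      have h2 : (Set.range x).ncard ≤ n := by
        rw [hrfin, Set.ncard_coe_finset]
        exact Finset.card_image_le.trans (by simp)
      have h3 : matroidRank M (Set.range x) ≤ (Set.range x).ncard := mr_le_ncard
      have hcard : (Set.range x).ncard = n := le_antisymm h2 (le_trans h1 h3)
      have hindep : M.Indep (Set.range x) := mr_indep hE (le_antisymm h3 (by rw [hcard]; exact h1))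
      have hinj : Function.Injective x := by
        have hc' := hcard
        rw [hrfin, Set.ncard_coe_finset] at hc'
        have : (Finset.univ.image x).card = (Finset.univ : Finset (Fin n)).card := by
          rw [hc', Finset.card_univ, Fintype.card_fin]
        have hio := Finset.card_image_iff.mp this
        rw [Finset.coe_univ] at hio
        exact Set.injOn_univ.mp hio
      exact ⟨x, hinj, fun i => by rw [hx i]; rfl, hindep⟩
    · push_neg at hsing
      obtain ⟨k, hk⟩ := hsing
      obtain ⟨a, ha, b, hb, hab⟩ := (Set.one_lt_ncard (F k).toFinite).mp hk
      have hupd : ∀ (c : α), ∀ i, Function.update F k (F k \ {c}) i ⊆ F i := by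
        intro c i
        rcases eq_or_ne i k with rfl | hik
        · rw [Function.update_self]; exact Set.diff_subset
        · rw [Function.update_of_ne hik]
      have hsumupd : ∀ c ∈ F k, ∑ i, (Function.update F k (F k \ {c}) i).ncard ≤ m := by
        intro c hc
        have hlt : ∑ i, (Function.update F k (F k \ {c}) i).ncard < ∑ i, (F i).ncard := by
          refine Finset.sum_lt_sum (fun i _ => Set.ncard_le_ncard (hupd c i) (F i).toFinite)
            ⟨k, Finset.mem_univ k, ?_⟩
          rw [Function.update_self]
          exact Set.ncard_diff_singleton_lt_of_mem hc (F k).toFinite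
        omega
      by_cases hc1 : ∀ J : Finset (Fin n),
          J.card ≤ matroidRank M (⋃ i ∈ J, Function.update F k (F k \ {a}) i)
      · obtain ⟨x, h1, h2, h3⟩ := ih _ (hsumupd a ha) hc1
        exact ⟨x, h1, fun i => hupd a i (h2 i), h3⟩
      by_cases hc2 : ∀ J : Finset (Fin n),
          J.card ≤ matroidRank M (⋃ i ∈ J, Function.update F k (F k \ {b}) i)
      · obtain ⟨x, h1, h2, h3⟩ := ih _ (hsumupd b hb) hc2
        exact ⟨x, h1, fun i => hupd b i (h2 i), h3⟩
      exfalso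
      push_neg at hc1 hc2
      obtain ⟨J₁, hJ₁⟩ := hc1
      obtain ⟨J₂, hJ₂⟩ := hc2
      have hmemk : ∀ (c : α) (J : Finset (Fin n)),
          matroidRank M (⋃ i ∈ J, Function.update F k (F k \ {c}) i) < J.card → k ∈ J := by
        intro c J h
        by_contra hkJ
        have : (⋃ i ∈ J, Function.update F k (F k \ {c}) i) = ⋃ i ∈ J, F i := by
          refine Set.iUnion₂_congr fun i hi => ?_
          rw [Function.update_of_ne (by rintro rfl; exact hkJ hi)]
        rw [this] at h
        exact absurd (hrado J) (by omega)
      have hk1 : k ∈ J₁ := hmemk a J₁ hJ₁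
      have hk2 : k ∈ J₂ := hmemk b J₂ hJ₂
      set X := ⋃ i ∈ J₁, Function.update F k (F k \ {a}) i with hX
      set Y := ⋃ i ∈ J₂, Function.update F k (F k \ {b}) i with hY
      have hsub1 : (⋃ i ∈ J₁ ∪ J₂, F i) ⊆ X ∪ Y := by
        intro e he
        simp only [Set.mem_iUnion, Finset.mem_union, exists_prop] at he
        obtain ⟨i, hi, hei⟩ := he
        rcases eq_or_ne i k with rfl | hik
        · rcases eq_or_ne e a with rfl | hea
          · refine Or.inr (Set.mem_biUnion hk2 ?_)
            rw [Function.update_self]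
            exact ⟨hei, by simpa using hab⟩
          · refine Or.inl (Set.mem_biUnion hk1 ?_)
            rw [Function.update_self]
            exact ⟨hei, by simpa using hea⟩
        · rcases hi with hi | hi
          · exact Or.inl (Set.mem_biUnion hi (by rwa [Function.update_of_ne hik]))
          · exact Or.inr (Set.mem_biUnion hi (by rwa [Function.update_of_ne hik]))
      have hsub2 : (⋃ i ∈ (J₁ ∩ J₂).erase k, F i) ⊆ X ∩ Y := by
        intro e he
        simp only [Set.mem_iUnion, exists_prop] at he
        obtain ⟨i, hi, hei⟩ := he
        obtain ⟨hik, hi12⟩ := Finset.mem_erase.mp hi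
        rw [Finset.mem_inter] at hi12
        constructor
        · exact Set.mem_biUnion hi12.1 (by rwa [Function.update_of_ne hik])
        · exact Set.mem_biUnion hi12.2 (by rwa [Function.update_of_ne hik])
      have u1 : (J₁ ∪ J₂).card ≤ matroidRank M (X ∪ Y) :=
        (hrado (J₁ ∪ J₂)).trans (mr_mono hsub1)
      have u2 : ((J₁ ∩ J₂).erase k).card ≤ matroidRank M (X ∩ Y) :=
        (hrado ((J₁ ∩ J₂).erase k)).trans (mr_mono hsub2)
      have e1 : (J₁ ∪ J₂).card + (J₁ ∩ J₂).card = J₁.card + J₂.card :=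
        Finset.card_union_add_card_inter J₁ J₂
      have e2 : ((J₁ ∩ J₂).erase k).card = (J₁ ∩ J₂).card - 1 :=
        Finset.card_erase_of_mem (Finset.mem_inter.mpr ⟨hk1, hk2⟩)
      have e3 : 1 ≤ (J₁ ∩ J₂).card :=
        Finset.card_pos.mpr ⟨k, Finset.mem_inter.mpr ⟨hk1, hk2⟩⟩
      have hsm := mr_submod hE X Y
      omega

end Rado

/-- Rado's theorem: for a matroid `M` on a finite ground set `F` with rank function `r` and a
family `F₁,…,Fₙ` of subsets of `F`, there is a transversal of the family which is independent
in `M` (an injective choice `i ↦ xᵢ` with `xᵢ ∈ Fᵢ` and `{x₁,…,xₙ}` independent) iff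
`r (⋃_{i ∈ J} Fᵢ) ≥ |J|` for all `J ⊆ {1,…,n}`. -/
theorem rado_matroid_transversal {α : Type*} [Fintype α] (M : Matroid α)
    (hE : M.E = Set.univ) {n : ℕ} (F : Fin n → Set α) :
    (∃ x : Fin n → α, Function.Injective x ∧ (∀ i, x i ∈ F i) ∧ M.Indep (Set.range x)) ↔
      ∀ J : Finset (Fin n), J.card ≤ matroidRank M (⋃ i ∈ J, F i) := by

  constructor
  · rintro ⟨x, hinj, hmem, hind⟩ J
    have hsub : x '' ↑J ⊆ ⋃ i ∈ J, F i := by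
      rintro _ ⟨i, hi, rfl⟩
      exact Set.mem_biUnion hi (hmem i)
    have hind' : M.Indep (x '' ↑J) := hind.subset (Set.image_subset_range x ↑J)
    have := mr_ge hind' hsub
    rwa [Set.ncard_image_of_injective _ hinj, Set.ncard_coe_finset] at this
  · exact fun h => rado_aux_s6 M hE (∑ i, (F i).ncard) F le_rfl h
end

section
/- Let A, B be finite-dimensional K-subspaces of L with K ⊆ A ∩ B. Suppose there exist K-subspaces Ā, B̄ of L such that A = K ⊕ Ā, B = K ⊕ B̄, and K ∩ (Ā + B̄ + span_K(Ā·B̄)) = {0}. Then dim_K span_K(A·B) ≥ dim_K A + dim_K B − 1. -/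
open Module Submodule Polynomial

section Kemp

variable {K L : Type*} [Field K] [DivisionRing L] [Algebra K L]

private noncomputable def kempMulLeft (e : L) (he : e ≠ 0) : L ≃ₗ[K] L :=
  LinearEquiv.ofLinear (LinearMap.mulLeft K e) (LinearMap.mulLeft K e⁻¹)
    (by ext x; simp [LinearMap.mulLeft_apply, ← mul_assoc, mul_inv_cancel₀ he])
    (by ext x; simp [LinearMap.mulLeft_apply, ← mul_assoc, inv_mul_cancel₀ he])

private noncomputable def kempMulRight (e : L) (he : e ≠ 0) : L ≃ₗ[K] L :=
  LinearEquiv.ofLinear (LinearMap.mulRight K e) (LinearMap.mulRight K e⁻¹)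
    (by ext x; simp [LinearMap.mulRight_apply, mul_assoc, inv_mul_cancel₀ he])
    (by ext x; simp [LinearMap.mulRight_apply, mul_assoc, mul_inv_cancel₀ he])

@[simp] private lemma kempMulLeft_apply (e : L) (he : e ≠ 0) (x : L) :
    kempMulLeft (K := K) e he x = e * x := rfl

@[simp] private lemma kempMulRight_apply (e : L) (he : e ≠ 0) (x : L) :
    kempMulRight (K := K) e he x = x * e := rfl

/-- If all positive powers of a nonzero `e` lie in `B ≤ S` with `K ⊓ S = ⊥`, contradiction. -/
private lemma kemp_pow_false (S B : Submodule K L) [FiniteDimensional K S]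
    (hS : (1 : Submodule K L) ⊓ S = ⊥) (hB : B ≤ S) {e : L} (he0 : e ≠ 0)
    (hpow : ∀ k : ℕ, e ^ (k + 1) ∈ B) : False := by
  haveI : FiniteDimensional K B := Submodule.finiteDimensional_of_le hB
  set d := finrank K B with hd
  have hni : ¬ LinearIndependent K (fun i : Fin (d + 1) => (⟨e ^ ((i : ℕ) + 1), hpow i⟩ : B)) := by
    intro h
    have := h.fintype_card_le_finrank
    simp [hd] at this
  obtain ⟨g, hg, i₀, hi₀⟩ := Fintype.not_linearIndependent_iff.mp hni
  have hgL : ∑ i : Fin (d + 1), g i • e ^ ((i : ℕ) + 1) = 0 := by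
    have := congrArg (Submodule.subtype B) hg
    simpa using this
  set q : K[X] := ∑ i : Fin (d + 1), Polynomial.monomial (i : ℕ) (g i) with hq
  have hqc : q.coeff (i₀ : ℕ) = g i₀ := by
    rw [hq, Polynomial.finset_sum_coeff]
    rw [Finset.sum_eq_single i₀]
    · simp
    · intro b _ hb
      rw [Polynomial.coeff_monomial, if_neg (by exact_mod_cast fun h => hb (Fin.val_injective h))]
    · simp
  have hqne : q ≠ 0 := fun h0 => hi₀ (by rw [← hqc, h0, Polynomial.coeff_zero])
  have haqe : (Polynomial.aeval e) q * e = 0 := by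
    rw [hq, map_sum, Finset.sum_mul, ← hgL]
    refine Finset.sum_congr rfl fun i _ => ?_
    rw [Polynomial.aeval_monomial, Algebra.smul_def, mul_assoc, ← pow_succ]
  have haq : (Polynomial.aeval e) q = 0 := by
    rcases mul_eq_zero.mp haqe with h | h
    · exact h
    · exact absurd h he0
  have hint : IsIntegral K e := (IsAlgebraic.isIntegral ⟨q, hqne, haq⟩)
  have hc0 : (minpoly K e).coeff 0 ≠ 0 := minpoly.coeff_zero_ne_zero hint he0
  have h0 : (0 : L) =
      ∑ i ∈ Finset.range ((minpoly K e).natDegree + 1), (minpoly K e).coeff i • e ^ i := by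
    rw [← Polynomial.aeval_eq_sum_range, minpoly.aeval]
  rw [Finset.sum_range_succ'] at h0
  have heq : (minpoly K e).coeff 0 • (1 : L) =
      - ∑ i ∈ Finset.range (minpoly K e).natDegree,
          (minpoly K e).coeff (i + 1) • e ^ (i + 1) := by
    have := eq_neg_of_add_eq_zero_right h0.symm
    rwa [pow_zero] at this
  have hmem : (minpoly K e).coeff 0 • (1 : L) ∈ B := by
    rw [heq]
    exact neg_mem (Submodule.sum_mem _ fun i _ => Submodule.smul_mem _ _ (hpow i))
  have hmem1 : (minpoly K e).coeff 0 • (1 : L) ∈ (1 : Submodule K L) := by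
    rw [Submodule.one_eq_span]
    exact Submodule.smul_mem _ _ (Submodule.mem_span_singleton_self 1)
  have hbot : (minpoly K e).coeff 0 • (1 : L) ∈ (⊥ : Submodule K L) := by
    rw [← hS]; exact Submodule.mem_inf.mpr ⟨hmem1, hB hmem⟩
  rw [Submodule.mem_bot] at hbot
  apply hc0
  apply (algebraMap K L).injective
  rw [Algebra.algebraMap_eq_smul_one, hbot, map_zero]

private lemma kemp_aux (S : Submodule K L) [FiniteDimensional K S]
    (hS : (1 : Submodule K L) ⊓ S = ⊥) :
    ∀ (p q : ℕ) (A B : Submodule K L), A ≤ S → B ≤ S → A * B ≤ S →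
      2 * finrank K S ≤ finrank K A + finrank K B + p →
      finrank K B ≤ q →
      finrank K A + finrank K B ≤ finrank K S := by
  intro p
  induction p using Nat.strong_induction_on with
  | _ p ihp =>
  intro q
  induction q using Nat.strong_induction_on with
  | _ q ihq =>
  intro A B hAS hBS hABS hp hq
  haveI : FiniteDimensional K A := Submodule.finiteDimensional_of_le hAS
  haveI : FiniteDimensional K B := Submodule.finiteDimensional_of_le hBS
  by_cases hd : A ⊓ B = ⊥
  · have hsie := Submodule.finrank_sup_add_finrank_inf_eq A B
    rw [hd, finrank_bot, add_zero] at hsie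
    rw [← hsie]
    exact Submodule.finrank_mono (sup_le hAS hBS)
  · obtain ⟨e, heAB, he0⟩ := (Submodule.ne_bot_iff _).mp hd
    have heA : e ∈ A := (Submodule.mem_inf.mp heAB).1
    have heB : e ∈ B := (Submodule.mem_inf.mp heAB).2
    set fl : L →ₗ[K] L := (kempMulLeft (K := K) e he0).toLinearMap with hfl
    set fr : L →ₗ[K] L := (kempMulRight (K := K) e he0).toLinearMap with hfr
    have hflx : ∀ x : L, fl x = e * x := fun x => rfl
    have hfrx : ∀ x : L, fr x = x * e := fun x => rfl
    have hflinj : Function.Injective fl := (kempMulLeft (K := K) e he0).injective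
    have hfrinj : Function.Injective fr := (kempMulRight (K := K) e he0).injective
    set Ae := Submodule.map fr A with hAe
    set eB := Submodule.map fl B with heBdef
    have hAe_AB : Ae ≤ A * B := by
      rw [hAe, Submodule.map_le_iff_le_comap]
      intro x hx
      exact Submodule.mul_mem_mul hx heB
    have heB_AB : eB ≤ A * B := by
      rw [heBdef, Submodule.map_le_iff_le_comap]
      intro x hx
      exact Submodule.mul_mem_mul heA hx
    haveI : FiniteDimensional K Ae :=
      Submodule.finiteDimensional_of_le (hAe_AB.trans hABS)
    haveI : FiniteDimensional K eB :=
      Submodule.finiteDimensional_of_le (heB_AB.trans hABS)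
    have hfrAe : finrank K Ae = finrank K A :=
      LinearEquiv.finrank_map_eq (kempMulRight (K := K) e he0) A
    have hflB : finrank K eB = finrank K B :=
      LinearEquiv.finrank_map_eq (kempMulLeft (K := K) e he0) B
    have hmup := Submodule.finrank_sup_add_finrank_inf_eq A Ae
    have hnup := Submodule.finrank_sup_add_finrank_inf_eq eB B
    by_cases hc : finrank K ↥(eB ⊔ B) + finrank K A ≤ finrank K ↥(A ⊔ Ae) + finrank K B
    · -- T1 transform : (A ⊔ Ae, B ⊓ e⁻¹B)
      by_cases heBB : eB ≤ B
      · exact absurd (kemp_pow_false S B hS hBS he0 (fun k => by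
          induction k with
          | zero => simpa using heB
          | succ k ih =>
            exact heBB (Submodule.mem_map.mpr ⟨e ^ (k + 1), ih, by
              rw [hflx, ← pow_succ']⟩))) not_false
      · set B₁ := B ⊓ Submodule.comap fl B with hB₁
        have hmapB₁ : Submodule.map fl B₁ = eB ⊓ B := by
          have hrange : LinearMap.range fl = ⊤ :=
            LinearMap.range_eq_top.mpr (kempMulLeft (K := K) e he0).surjective
          rw [hB₁, Submodule.map_inf fl hflinj, Submodule.map_comap_eq, hrange, top_inf_eq]
        have hn₁ : finrank K B₁ = finrank K ↥(eB ⊓ B) := by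
          rw [← hmapB₁]
          exact (LinearEquiv.finrank_map_eq (kempMulLeft (K := K) e he0) B₁).symm
        have hlt : finrank K ↥(eB ⊓ B) < finrank K B := by
          rcases lt_or_ge (finrank K ↥(eB ⊓ B)) (finrank K eB) with h | h
          · omega
          · exfalso
            apply heBB
            have heq := Submodule.eq_of_le_of_finrank_le (inf_le_left : eB ⊓ B ≤ eB) h
            rw [← heq]
            exact inf_le_right
        have hA₁S : A ⊔ Ae ≤ S := sup_le hAS (hAe_AB.trans hABS)
        have hB₁S : B₁ ≤ S := inf_le_left.trans hBS
        have hprod : (A ⊔ Ae) * B₁ ≤ S := by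
          rw [Submodule.sup_mul]
          apply sup_le
          · exact (mul_le_mul' le_rfl inf_le_left).trans hABS
          · refine le_trans ?_ hABS
            rw [Submodule.mul_le]
            rintro x hx y hy
            obtain ⟨a, ha, rfl⟩ := Submodule.mem_map.mp hx
            have hyB : y ∈ B := (Submodule.mem_inf.mp hy).1
            have hey : e * y ∈ B := by
              have := (Submodule.mem_inf.mp hy).2
              rwa [Submodule.mem_comap, hflx] at this
            rw [hfrx, mul_assoc]
            exact Submodule.mul_mem_mul ha hey
        haveI : FiniteDimensional K B₁ := Submodule.finiteDimensional_of_le hB₁S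
        have hkey : finrank K A + finrank K B ≤ finrank K ↥(A ⊔ Ae) + finrank K B₁ := by
          omega
        have hres := ihq (finrank K B₁) (by omega) (A ⊔ Ae) B₁ hA₁S hB₁S hprod
          (by omega) (le_refl _)
        omega
    · -- T2 transform : (A ⊓ Ae⁻¹, eB ⊔ B)
      set A₂ := A ⊓ Submodule.comap fr A with hA₂
      have hmapA₂ : Submodule.map fr A₂ = Ae ⊓ A := by
        have hrange : LinearMap.range fr = ⊤ :=
          LinearMap.range_eq_top.mpr (kempMulRight (K := K) e he0).surjective
        rw [hA₂, Submodule.map_inf fr hfrinj, Submodule.map_comap_eq, hrange, top_inf_eq]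
      have hm₂ : finrank K A₂ = finrank K ↥(Ae ⊓ A) := by
        rw [← hmapA₂]
        exact (LinearEquiv.finrank_map_eq (kempMulRight (K := K) e he0) A₂).symm
      have hinfc : finrank K ↥(Ae ⊓ A) = finrank K ↥(A ⊓ Ae) := by rw [inf_comm]
      set B₂ := eB ⊔ B with hB₂
      have hA₂S : A₂ ≤ S := inf_le_left.trans hAS
      have hB₂S : B₂ ≤ S := sup_le (heB_AB.trans hABS) hBS
      have hprod2 : A₂ * B₂ ≤ S := by
        rw [Submodule.mul_sup]
        apply sup_le
        · refine le_trans ?_ hABS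
          rw [Submodule.mul_le]
          rintro x hx y hy
          obtain ⟨b, hb, rfl⟩ := Submodule.mem_map.mp hy
          have hxA : x ∈ A := (Submodule.mem_inf.mp hx).1
          have hxe : x * e ∈ A := by
            have := (Submodule.mem_inf.mp hx).2
            rwa [Submodule.mem_comap, hfrx] at this
          rw [hflx, ← mul_assoc]
          exact Submodule.mul_mem_mul hxe hb
        · exact (mul_le_mul' inf_le_left le_rfl).trans hABS
      haveI : FiniteDimensional K A₂ := Submodule.finiteDimensional_of_le hA₂S
      haveI : FiniteDimensional K B₂ := Submodule.finiteDimensional_of_le hB₂S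
      have hkey2 : finrank K A + finrank K B + 1 ≤ finrank K A₂ + finrank K B₂ := by
        omega
      have hA₂D : finrank K A₂ ≤ finrank K S := Submodule.finrank_mono hA₂S
      have hB₂D : finrank K B₂ ≤ finrank K S := Submodule.finrank_mono hB₂S
      obtain ⟨p', rfl⟩ : ∃ p', p = p' + 1 := ⟨p - 1, by omega⟩
      have hres := ihp p' (by omega) (finrank K B₂) A₂ B₂ hA₂S hB₂S hprod2
        (by omega) (le_refl _)
      omega

end Kemp

/-- Linear version of Kemperman's theorem: if `A, B` are finite-dimensional `K`-subspaces
of `L` containing `K` (the subspace `1`), admitting complements `Ā, B̄` of `K` in `A`, `B`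
with `K ∩ (Ā + B̄ + ⟨Ā·B̄⟩) = 0`, then `dim ⟨A·B⟩ ≥ dim A + dim B - 1`. -/
theorem kemperman_linear {K L : Type*} [Field K] [DivisionRing L] [Algebra K L]
    (A B : Submodule K L) [FiniteDimensional K A] [FiniteDimensional K B]
    (hKA : (1 : Submodule K L) ≤ A) (hKB : (1 : Submodule K L) ≤ B)
    (Abar Bbar : Submodule K L)
    (hAsum : (1 : Submodule K L) ⊔ Abar = A)
    (hAdisj : (1 : Submodule K L) ⊓ Abar = ⊥)
    (hBsum : (1 : Submodule K L) ⊔ Bbar = B)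
    (hBdisj : (1 : Submodule K L) ⊓ Bbar = ⊥)
    (h : (1 : Submodule K L) ⊓ (Abar ⊔ Bbar ⊔ Abar * Bbar) = ⊥) :
    Module.finrank K A + Module.finrank K B - 1 ≤ Module.finrank K ↥(A * B) := by
  classical
  haveI hfdA : FiniteDimensional K Abar :=
    Submodule.finiteDimensional_of_le ((le_sup_right : Abar ≤ _).trans_eq hAsum)
  haveI hfdB : FiniteDimensional K Bbar :=
    Submodule.finiteDimensional_of_le ((le_sup_right : Bbar ≤ _).trans_eq hBsum)
  haveI hfdAB : FiniteDimensional K ↥(Abar * Bbar) :=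
    ((Abar * Bbar).fg_iff_finiteDimensional).mp
      (Submodule.FG.mul (Abar.fg_iff_finiteDimensional.mpr hfdA)
        (Bbar.fg_iff_finiteDimensional.mpr hfdB))
  haveI h1fd : FiniteDimensional K (1 : Submodule K L) := by
    rw [Submodule.one_eq_span]
    infer_instance
  set Sb : Submodule K L := Abar ⊔ Bbar ⊔ Abar * Bbar with hSb
  haveI : FiniteDimensional K Sb := by
    rw [hSb]
    infer_instance
  have hAbS : Abar ≤ Sb := (le_sup_left : Abar ≤ Abar ⊔ Bbar).trans le_sup_left
  have hBbS : Bbar ≤ Sb := (le_sup_right : Bbar ≤ Abar ⊔ Bbar).trans le_sup_left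
  have hABbS : Abar * Bbar ≤ Sb := le_sup_right
  have key : finrank K Abar + finrank K Bbar ≤ finrank K Sb :=
    kemp_aux Sb h (2 * finrank K Sb) (finrank K Bbar) Abar Bbar hAbS hBbS hABbS
      (by omega) (le_refl _)
  have hone : finrank K (1 : Submodule K L) = 1 := by
    rw [Submodule.one_eq_span]
    exact finrank_span_singleton one_ne_zero
  have hAB : A * B = (1 : Submodule K L) ⊔ Sb := by
    rw [← hAsum, ← hBsum, Submodule.sup_mul, Submodule.mul_sup, Submodule.mul_sup,
      Submodule.one_mul, Submodule.one_mul, Submodule.mul_one, hSb]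
    apply le_antisymm
    · apply sup_le (sup_le le_sup_left ?_) (sup_le ?_ ?_)
      · exact le_sup_of_le_right ((le_sup_right : Bbar ≤ Abar ⊔ Bbar).trans le_sup_left)
      · exact le_sup_of_le_right ((le_sup_left : Abar ≤ Abar ⊔ Bbar).trans le_sup_left)
      · exact le_sup_of_le_right le_sup_right
    · apply sup_le (le_sup_of_le_left le_sup_left) (sup_le (sup_le ?_ ?_) ?_)
      · exact le_sup_of_le_right le_sup_left
      · exact le_sup_of_le_left le_sup_right
      · exact le_sup_of_le_right le_sup_right
  have hsum := Submodule.finrank_sup_add_finrank_inf_eq (1 : Submodule K L) Sb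
  rw [h, finrank_bot, add_zero] at hsum
  have hArank := Submodule.finrank_sup_add_finrank_inf_eq (1 : Submodule K L) Abar
  rw [hAdisj, finrank_bot, add_zero, hAsum] at hArank
  have hBrank := Submodule.finrank_sup_add_finrank_inf_eq (1 : Submodule K L) Bbar
  rw [hBdisj, finrank_bot, add_zero, hBsum] at hBrank
  rw [hAB]
  omega
end

section
/- Let U, V be finite-dimensional K-subspaces of L. Assume that U, V, and the product set U·V are all contained in a K-subspace X of L satisfying K ∩ X = {0}. Then dim_K X ≥ dim_K U + dim_K V. -/
open Module Submodule

section Kemp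

variable {K L : Type*} [Field K] [DivisionRing L] [Algebra K L]

private lemma powers_trap (X M : Submodule K L) [FiniteDimensional K M] (hMX : M ≤ X)
    (hX : (1 : Submodule K L) ⊓ X = ⊥) (x : L) (hx : x ≠ 0)
    (hpow : ∀ n : ℕ, x ^ (n + 1) ∈ M) : False := by
  classical
  set d := finrank K M with hd
  have hdep : ¬ LinearIndependent K (fun i : Fin (d + 1) =>
      (⟨x ^ ((i : ℕ) + 1), hpow _⟩ : M)) := by
    intro h
    have := h.fintype_card_le_finrank
    simp only [Fintype.card_fin] at this
    omega
  rw [Fintype.not_linearIndependent_iff] at hdep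
  obtain ⟨g, hrel, i₀, hi₀⟩ := hdep
  have hrelL : ∑ i : Fin (d + 1), g i • x ^ ((i : ℕ) + 1) = 0 := by
    have := congrArg (Subtype.val) hrel
    push_cast at this
    simpa using this
  set T : Finset (Fin (d + 1)) := Finset.univ.filter (fun i => g i ≠ 0) with hT
  have hTne : T.Nonempty := ⟨i₀, by simp [hT, hi₀]⟩
  set j := T.min' hTne with hj
  have hjT : j ∈ T := T.min'_mem hTne
  have hgj : g j ≠ 0 := by
    have := hjT; simp [hT] at this; exact this
  have hjle : ∀ i ∈ T, (j : Fin (d+1)) ≤ i := fun i hi => T.min'_le i hi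
  have hsumT : ∑ i ∈ T, g i • x ^ ((i : ℕ) + 1) = 0 := by
    rw [← hrelL]
    refine Finset.sum_filter_of_ne ?_
    intro i _ hne hgi
    exact hne (by rw [hgi, zero_smul])
  have hfac : ∀ i ∈ T, g i • x ^ ((i : ℕ) + 1)
      = x ^ ((j : ℕ) + 1) * (g i • x ^ ((i : ℕ) - (j : ℕ))) := by
    intro i hi
    rw [Algebra.mul_smul_comm, ← pow_add]
    congr 2
    have : (j : ℕ) ≤ (i : ℕ) := hjle i hi
    omega
  have hsum2 : x ^ ((j : ℕ) + 1) * (∑ i ∈ T, g i • x ^ ((i : ℕ) - (j : ℕ))) = 0 := by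
    rw [Finset.mul_sum, ← Finset.sum_congr rfl hfac]
    exact hsumT
  have hxp : x ^ ((j : ℕ) + 1) ≠ 0 := pow_ne_zero _ hx
  have hsum3 : ∑ i ∈ T, g i • x ^ ((i : ℕ) - (j : ℕ)) = 0 :=
    (mul_eq_zero.mp hsum2).resolve_left hxp
  have hsplit : g j • (1 : L) + ∑ i ∈ T.erase j, g i • x ^ ((i : ℕ) - (j : ℕ)) = 0 := by
    rw [← hsum3]
    have := Finset.add_sum_erase T (fun i => g i • x ^ ((i : ℕ) - (j : ℕ))) hjT
    simpa using this
  have hmem : ∑ i ∈ T.erase j, g i • x ^ ((i : ℕ) - (j : ℕ)) ∈ M := by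
    refine Submodule.sum_mem _ ?_
    intro i hi
    have hiT : i ∈ T := Finset.mem_of_mem_erase hi
    have hij : i ≠ j := Finset.ne_of_mem_erase hi
    have hle : (j : ℕ) ≤ (i : ℕ) := hjle i hiT
    have hlt : (j : ℕ) < (i : ℕ) := by
      rcases lt_or_eq_of_le hle with h | h
      · exact h
      · exact absurd (Fin.ext h.symm) hij
    have heq : (i : ℕ) - (j : ℕ) = ((i : ℕ) - (j : ℕ) - 1) + 1 := by omega
    rw [heq]
    exact Submodule.smul_mem _ _ (hpow _)
  have hX1 : g j • (1 : L) ∈ X := by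
    have heq : g j • (1 : L) = -(∑ i ∈ T.erase j, g i • x ^ ((i : ℕ) - (j : ℕ))) := by
      linear_combination (norm := module) hsplit
    rw [heq]
    exact Submodule.neg_mem _ (hMX hmem)
  have hone : g j • (1 : L) ∈ (1 : Submodule K L) := by
    rw [Submodule.one_eq_span]
    exact Submodule.smul_mem _ _ (Submodule.mem_span_singleton_self 1)
  have hbot : g j • (1 : L) ∈ (⊥ : Submodule K L) := by
    rw [← hX]; exact ⟨hone, hX1⟩
  rw [Submodule.mem_bot] at hbot
  rcases smul_eq_zero.mp hbot with h | h
  · exact hgj h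
  · exact one_ne_zero h

private lemma trap_left (X M : Submodule K L) [FiniteDimensional K M] (hMX : M ≤ X)
    (hX : (1 : Submodule K L) ⊓ X = ⊥) (x : L) (hx : x ≠ 0) (hxM : x ∈ M)
    (hmul : ∀ m ∈ M, x * m ∈ M) : False := by
  refine powers_trap X M hMX hX x hx ?_
  intro n
  induction n with
  | zero => simpa using hxM
  | succ n ih => rw [pow_succ']; exact hmul _ ih

private lemma trap_right (X M : Submodule K L) [FiniteDimensional K M] (hMX : M ≤ X)
    (hX : (1 : Submodule K L) ⊓ X = ⊥) (x : L) (hx : x ≠ 0) (hxM : x ∈ M)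
    (hmul : ∀ m ∈ M, m * x ∈ M) : False := by
  refine powers_trap X M hMX hX x hx ?_
  intro n
  induction n with
  | zero => simpa using hxM
  | succ n ih => rw [pow_succ]; exact hmul _ ih

private lemma kemp_fd (X : Submodule K L) [FiniteDimensional K X]
    (hX : (1 : Submodule K L) ⊓ X = ⊥) (U V : Submodule K L)
    (hU : U ≤ X) (hV : V ≤ X) (hUV : ∀ u ∈ U, ∀ v ∈ V, u * v ∈ X) :
    finrank K U + finrank K V ≤ finrank K X := by
  classical
  by_contra hcon
  push_neg at hcon
  set Q : ℕ → Prop := fun s => ∃ A B : Submodule K L, A ≤ X ∧ B ≤ X ∧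
      (∀ a ∈ A, ∀ b ∈ B, a * b ∈ X) ∧ s = finrank K A + finrank K B with hQdef
  have hbound : ∀ s, Q s → s ≤ 2 * finrank K X := by
    rintro s ⟨A, B, hA, hB, -, rfl⟩
    have h1 : finrank K A ≤ finrank K X := Submodule.finrank_mono hA
    have h2 : finrank K B ≤ finrank K X := Submodule.finrank_mono hB
    omega
  have hQ0 : Q (finrank K U + finrank K V) := ⟨U, V, hU, hV, hUV, rfl⟩
  set s' := Nat.findGreatest Q (2 * finrank K X) with hs'
  have hQs' : Q s' := Nat.findGreatest_spec (hbound _ hQ0) hQ0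
  have hs'ge : finrank K U + finrank K V ≤ s' := Nat.le_findGreatest (hbound _ hQ0) hQ0
  have hd : finrank K X < s' := lt_of_lt_of_le hcon hs'ge
  have hT1 : ∀ A B : Submodule K L, A ≤ X → B ≤ X → (∀ a ∈ A, ∀ b ∈ B, a * b ∈ X) →
      finrank K A + finrank K B ≤ s' := by
    intro A B hA hB hAB
    have hq : Q (finrank K A + finrank K B) := ⟨A, B, hA, hB, hAB, rfl⟩
    exact Nat.le_findGreatest (hbound _ hq) hq
  have main : ∀ m : ℕ, ∀ A B : Submodule K L, A ≤ X → B ≤ X →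
      (∀ a ∈ A, ∀ b ∈ B, a * b ∈ X) → finrank K A + finrank K B = s' →
      finrank K A = m → False := by
    intro m
    induction m using Nat.strong_induction_on with
    | _ m IH =>
    intro A B hA hB hAB hsum hm
    haveI : FiniteDimensional K A := Submodule.finiteDimensional_of_le hA
    haveI : FiniteDimensional K B := Submodule.finiteDimensional_of_le hB
    have hAle : finrank K A ≤ finrank K X := Submodule.finrank_mono hA
    have hBle : finrank K B ≤ finrank K X := Submodule.finrank_mono hB
    set n := finrank K B with hn
    have hmpos : 0 < m := by
      by_contra h0
      have hA0 : A = ⊥ := by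
        rw [← Submodule.finrank_eq_zero (S := A)]; omega
      omega
    have hnpos : 0 < n := by
      by_contra h0
      have hB0 : B = ⊥ := by
        rw [← Submodule.finrank_eq_zero (S := B)]; omega
      omega
    -- case B = X : trap with any nonzero x ∈ A
    by_cases hBX : finrank K X ≤ finrank K B
    · have hBeq : B = X := Submodule.eq_of_le_of_finrank_le hB hBX
      have hAbot : A ≠ ⊥ := by
        intro h; rw [h] at hm; rw [finrank_bot] at hm; omega
      obtain ⟨x, hxA, hx0⟩ := (Submodule.ne_bot_iff A).mp hAbot
      refine trap_left X B hB hX x hx0 ?_ ?_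
      · rw [hBeq]; exact hA hxA
      · intro b hb
        have : x * b ∈ X := hAB x hxA b hb
        rwa [hBeq]
    -- case A = X : trap with any nonzero y ∈ B
    by_cases hAX : finrank K X ≤ finrank K A
    · have hAeq : A = X := Submodule.eq_of_le_of_finrank_le hA hAX
      have hBbot : B ≠ ⊥ := by
        intro h; rw [h] at hn; rw [finrank_bot] at hn; omega
      obtain ⟨y, hyB, hy0⟩ := (Submodule.ne_bot_iff B).mp hBbot
      refine trap_right X A hA hX y hy0 ?_ ?_
      · rw [hAeq]; exact hB hyB
      · intro a ha
        have : a * y ∈ X := hAB a ha y hyB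
        rwa [hAeq]
    push_neg at hBX hAX
    -- pick x in A ⊓ B
    have hWpos : 0 < finrank K (A ⊓ B : Submodule K L) := by
      have hsupinf := Submodule.finrank_sup_add_finrank_inf_eq A B
      have hsuple : finrank K (A ⊔ B : Submodule K L) ≤ finrank K X :=
        Submodule.finrank_mono (sup_le hA hB)
      omega
    have hWbot : (A ⊓ B : Submodule K L) ≠ ⊥ := by
      intro h
      rw [h, finrank_bot] at hWpos; omega
    obtain ⟨x, hxW, hx0⟩ := (Submodule.ne_bot_iff _).mp hWbot
    have hxA : x ∈ A := hxW.1
    have hxB : x ∈ B := hxW.2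
    -- traps
    by_cases hLtrap : ∀ b ∈ B, x * b ∈ B
    · exact trap_left X B hB hX x hx0 hxB hLtrap
    by_cases hRtrap : ∀ a ∈ A, a * x ∈ A
    · exact trap_right X A hA hX x hx0 hxA hRtrap
    push_neg at hLtrap hRtrap
    obtain ⟨vb, hvbB, hvb⟩ := hLtrap
    obtain ⟨ua, huaA, hua⟩ := hRtrap
    -- linear maps
    set Lx : L →ₗ[K] L := LinearMap.mulLeft K x with hLx
    set Rx : L →ₗ[K] L := LinearMap.mulRight K x with hRx
    have hLxinj : Function.Injective Lx := by
      intro a b h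
      simp only [hLx, LinearMap.mulLeft_apply] at h
      exact mul_right_injective₀ hx0 h
    have hRxinj : Function.Injective Rx := by
      intro a b h
      simp only [hRx, LinearMap.mulRight_apply] at h
      exact mul_left_injective₀ hx0 h
    set xB := Submodule.map Lx B with hxBdef
    set Ax := Submodule.map Rx A with hAxdef
    set B₁ := B ⊓ Submodule.comap Lx B with hB₁def
    set A₁ := A ⊓ Submodule.comap Rx A with hA₁def
    have hxB_le : xB ≤ X := by
      rintro _ ⟨b, hb, rfl⟩
      simpa [hLx] using hAB x hxA b hb
    have hAx_le : Ax ≤ X := by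
      rintro _ ⟨a, ha, rfl⟩
      simpa [hRx] using hAB a ha x hxB
    haveI : FiniteDimensional K xB := Submodule.finiteDimensional_of_le hxB_le
    haveI : FiniteDimensional K Ax := Submodule.finiteDimensional_of_le hAx_le
    haveI : FiniteDimensional K B₁ := Submodule.finiteDimensional_of_le
      (le_trans inf_le_left hB)
    haveI : FiniteDimensional K A₁ := Submodule.finiteDimensional_of_le
      (le_trans inf_le_left hA)
    haveI : FiniteDimensional K (B ⊔ xB : Submodule K L) :=
      Submodule.finiteDimensional_of_le (sup_le hB hxB_le)
    haveI : FiniteDimensional K (A ⊔ Ax : Submodule K L) :=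
      Submodule.finiteDimensional_of_le (sup_le hA hAx_le)
    -- dimension identities
    have hrank_xB : finrank K xB = n := by
      rw [hxBdef]
      exact (LinearEquiv.finrank_eq (Submodule.equivMapOfInjective Lx hLxinj B)).symm
    have hrank_Ax : finrank K Ax = m := by
      rw [hAxdef, ← hm]
      exact (LinearEquiv.finrank_eq (Submodule.equivMapOfInjective Rx hRxinj A)).symm
    have hmapB₁ : Submodule.map Lx B₁ = xB ⊓ B := by
      apply le_antisymm
      · rintro _ ⟨b, ⟨hb1, hb2⟩, rfl⟩
        exact ⟨⟨b, hb1, rfl⟩, hb2⟩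
      · rintro y ⟨⟨b, hb, rfl⟩, hyB⟩
        exact ⟨b, ⟨hb, hyB⟩, rfl⟩
    have hmapA₁ : Submodule.map Rx A₁ = Ax ⊓ A := by
      apply le_antisymm
      · rintro _ ⟨a, ⟨ha1, ha2⟩, rfl⟩
        exact ⟨⟨a, ha1, rfl⟩, ha2⟩
      · rintro y ⟨⟨a, ha, rfl⟩, hyA⟩
        exact ⟨a, ⟨ha, hyA⟩, rfl⟩
    have hrank_B₁ : finrank K B₁ = finrank K (xB ⊓ B : Submodule K L) := by
      rw [← hmapB₁]
      exact LinearEquiv.finrank_eq (Submodule.equivMapOfInjective Lx hLxinj B₁)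
    have hrank_A₁ : finrank K A₁ = finrank K (Ax ⊓ A : Submodule K L) := by
      rw [← hmapA₁]
      exact LinearEquiv.finrank_eq (Submodule.equivMapOfInjective Rx hRxinj A₁)
    have hsi_B : finrank K (xB ⊔ B : Submodule K L) + finrank K (xB ⊓ B : Submodule K L)
        = finrank K xB + finrank K B := Submodule.finrank_sup_add_finrank_inf_eq xB B
    have hsi_A : finrank K (Ax ⊔ A : Submodule K L) + finrank K (Ax ⊓ A : Submodule K L)
        = finrank K Ax + finrank K A := Submodule.finrank_sup_add_finrank_inf_eq Ax A
    -- strictness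
    have hBlt : B < B ⊔ xB := by
      refine lt_of_le_of_ne le_sup_left ?_
      intro h
      apply hvb
      have : x * vb ∈ B ⊔ xB := (le_sup_right : xB ≤ B ⊔ xB) (⟨vb, hvbB, rfl⟩ : x * vb ∈ xB)
      rwa [← h] at this
    have hAlt : A < A ⊔ Ax := by
      refine lt_of_le_of_ne le_sup_left ?_
      intro h
      apply hua
      have : ua * x ∈ A ⊔ Ax := (le_sup_right : Ax ≤ A ⊔ Ax) (⟨ua, huaA, rfl⟩ : ua * x ∈ Ax)
      rwa [← h] at this
    have hBlt' : n < finrank K (B ⊔ xB : Submodule K L) :=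
      Submodule.finrank_lt_finrank_of_lt hBlt
    have hAlt' : m < finrank K (A ⊔ Ax : Submodule K L) := by
      rw [← hm]
      exact Submodule.finrank_lt_finrank_of_lt hAlt
    -- transformed pairs
    have pair1 : ∀ z ∈ (A ⊔ Ax : Submodule K L), ∀ w ∈ B₁, z * w ∈ X := by
      intro z hz w hw
      rw [Submodule.mem_sup] at hz
      obtain ⟨a, ha, y, hy, rfl⟩ := hz
      obtain ⟨a', ha', rfl⟩ := hy
      obtain ⟨hwB, hwc⟩ := hw
      have hxw : x * w ∈ B := hwc
      have h1 : a * w ∈ X := hAB a ha w hwB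
      have h2 : Rx a' * w = a' * (x * w) := by
        simp only [hRx, LinearMap.mulRight_apply, mul_assoc]
      have h3 : Rx a' * w ∈ X := by
        rw [h2]; exact hAB a' ha' (x * w) hxw
      have : (a + Rx a') * w = a * w + Rx a' * w := add_mul _ _ _
      rw [this]
      exact Submodule.add_mem _ h1 h3
    have pair2 : ∀ z ∈ A₁, ∀ w ∈ (B ⊔ xB : Submodule K L), z * w ∈ X := by
      intro z hz w hw
      obtain ⟨hzA, hzc⟩ := hz
      have hzx : z * x ∈ A := hzc
      rw [Submodule.mem_sup] at hw
      obtain ⟨b, hb, y, hy, rfl⟩ := hw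
      obtain ⟨b', hb', rfl⟩ := hy
      have h1 : z * b ∈ X := hAB z hzA b hb
      have h2 : z * Lx b' = (z * x) * b' := by
        simp only [hLx, LinearMap.mulLeft_apply, mul_assoc]
      have h3 : z * Lx b' ∈ X := by
        rw [h2]; exact hAB (z * x) hzx b' hb'
      rw [mul_add]
      exact Submodule.add_mem _ h1 h3
    have t1 : finrank K (A ⊔ Ax : Submodule K L) + finrank K B₁ ≤ s' :=
      hT1 _ _ (sup_le hA hAx_le) (le_trans inf_le_left hB) pair1
    have t2 : finrank K A₁ + finrank K (B ⊔ xB : Submodule K L) ≤ s' :=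
      hT1 _ _ (le_trans inf_le_left hA) (sup_le hB hxB_le) pair2
    -- arithmetic
    have hsup_comm_B : (xB ⊔ B : Submodule K L) = B ⊔ xB := sup_comm _ _
    have hsup_comm_A : (Ax ⊔ A : Submodule K L) = A ⊔ Ax := sup_comm _ _
    rw [hsup_comm_B, hrank_xB] at hsi_B
    rw [hsup_comm_A, hrank_Ax, ← hm] at hsi_A
    rw [hrank_B₁] at t1
    rw [hrank_A₁] at t2
    have hrecsum : finrank K A₁ + finrank K (B ⊔ xB : Submodule K L) = s' := by
      rw [hrank_A₁]; omega
    have hreclt : finrank K A₁ < m := by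
      rw [hrank_A₁]; omega
    exact IH (finrank K A₁) hreclt A₁ (B ⊔ xB)
      (le_trans inf_le_left hA) (sup_le hB hxB_le) pair2 hrecsum rfl
  obtain ⟨A, B, hA, hB, hAB, hsum⟩ := hQs'
  exact main (finrank K A) A B hA hB hAB hsum.symm rfl

end Kemp

/-- If the finite-dimensional `K`-subspaces `U, V` of `L` and the set of products `U·V` are
all contained in a `K`-subspace `X` of `L` with `K ∩ X = 0`, then
`dim X ≥ dim U + dim V`. -/
theorem kemperman_corollary {K L : Type*} [Field K] [DivisionRing L] [Algebra K L]
    (U V X : Submodule K L) [FiniteDimensional K U] [FiniteDimensional K V]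
    (hU : U ≤ X) (hV : V ≤ X) (hUV : ∀ u ∈ U, ∀ v ∈ V, u * v ∈ X)
    (hX : (1 : Submodule K L) ⊓ X = ⊥) :
    ((Module.finrank K U + Module.finrank K V : ℕ) : Cardinal) ≤ Module.rank K ↥X := by
  by_cases hfd : FiniteDimensional K X
  · have h := kemp_fd X hX U V hU hV hUV
    calc ((Module.finrank K U + Module.finrank K V : ℕ) : Cardinal)
        ≤ ((Module.finrank K X : ℕ) : Cardinal) := by exact_mod_cast h
      _ = Module.rank K X := Module.finrank_eq_rank K X
  · have hinf : Cardinal.aleph0 ≤ Module.rank K X := by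
      by_contra hlt
      push_neg at hlt
      exact hfd (Module.rank_lt_aleph0_iff.mp hlt)
    exact le_trans (le_of_lt (Cardinal.nat_lt_aleph0 _)) hinf
end

section
/- L has the linear matching property over K if and only if every intermediate sub-division-ring M with K ⊆ M ⊆ L that is finite-dimensional over K satisfies M = K or M = L. -/
/-- `A` is matched to `B` if every basis of `A` can be matched to some basis of `B`. -/
def SubspaceMatched (K : Type*) {L : Type*} [Field K] [DivisionRing L] [Algebra K L]
    (A B : Submodule K L) : Prop :=
  ∀ (n : ℕ) (a : Fin n → L), IsLinBasis K a A →
    ∃ b : Fin n → L, IsLinBasis K b B ∧ MatchedBases K a b A B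

/-- `L` has the linear matching property over `K` if for every `n ≥ 1` and all
`n`-dimensional subspaces `A, B` of `L` with `1 ∉ B`, `A` is matched to `B`. -/
def LinearMatchingProperty (K L : Type*) [Field K] [DivisionRing L] [Algebra K L] : Prop :=
  ∀ n : ℕ, 1 ≤ n → ∀ A B : Submodule K L,
    Module.finrank K A = n → Module.finrank K B = n → (1 : L) ∉ B →
      SubspaceMatched K A B

open Submodule Module

namespace KMatch

section Machinery
variable {K L : Type*} [Field K] [DivisionRing L] [Algebra K L]

variable {K L : Type*} [Field K] [DivisionRing L] [Algebra K L]

theorem fdOfFG {X : Submodule K L} (h : X.FG) : FiniteDimensional K X :=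
  (Submodule.fg_iff_finiteDimensional X).1 h

theorem le_mulR {S : Submodule K L} (h1 : (1:L) ∈ S) (X : Submodule K L) : X ≤ X * S := by
  intro x hx
  simpa using Submodule.mul_mem_mul hx h1

theorem le_mulL {S : Submodule K L} (h1 : (1:L) ∈ S) (X : Submodule K L) : X ≤ S * X := by
  intro x hx
  simpa using Submodule.mul_mem_mul h1 hx

theorem top_mulR {S : Submodule K L} (h1 : (1:L) ∈ S) : (⊤ : Submodule K L) * S = ⊤ :=
  top_le_iff.1 (le_mulR h1 ⊤)

theorem top_mulL {S : Submodule K L} (h1 : (1:L) ∈ S) : S * (⊤ : Submodule K L) = ⊤ :=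
  top_le_iff.1 (le_mulL h1 ⊤)

/-- the deficiency of `X` w.r.t. right multiplication by `S` -/
noncomputable def dltR (S X : Submodule K L) : ℕ := finrank K (X * S) - finrank K X

noncomputable def dltL (S X : Submodule K L) : ℕ := finrank K (S * X) - finrank K X

def CR (S X : Submodule K L) : Prop := X ≠ ⊥ ∧ X.FG ∧ X * S ≠ ⊤
def CL (S X : Submodule K L) : Prop := X ≠ ⊥ ∧ X.FG ∧ S * X ≠ ⊤

noncomputable def kR (S : Submodule K L) : ℕ := sInf (dltR S '' setOf (CR S))
noncomputable def kL (S : Submodule K L) : ℕ := sInf (dltL S '' setOf (CL S))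

def FragR (S X : Submodule K L) : Prop := CR S X ∧ dltR S X = kR S
def FragL (S X : Submodule K L) : Prop := CL S X ∧ dltL S X = kL S

noncomputable def dR (S : Submodule K L) : ℕ :=
  sInf ((fun X : Submodule K L => finrank K X) '' setOf (FragR S))
noncomputable def dL (S : Submodule K L) : ℕ :=
  sInf ((fun X : Submodule K L => finrank K X) '' setOf (FragL S))

def AtomR (S X : Submodule K L) : Prop := FragR S X ∧ finrank K X = dR S
def AtomL (S X : Submodule K L) : Prop := FragL S X ∧ finrank K X = dL S

variable {S X : Submodule K L}

theorem dltR_spec (h1 : (1:L) ∈ S) (hS : S.FG) (hX : X.FG) :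
    finrank K (X * S) = finrank K X + dltR S X := by
  haveI := fdOfFG (hX.mul hS)
  have hle : finrank K X ≤ finrank K (X * S) := Submodule.finrank_mono (le_mulR h1 X)
  unfold dltR
  omega

theorem dltL_spec (h1 : (1:L) ∈ S) (hS : S.FG) (hX : X.FG) :
    finrank K (S * X) = finrank K X + dltL S X := by
  haveI := fdOfFG (hS.mul hX)
  have hle : finrank K X ≤ finrank K (S * X) := Submodule.finrank_mono (le_mulL h1 X)
  unfold dltL
  omega

theorem kR_le (h : CR S X) : kR S ≤ dltR S X := Nat.sInf_le ⟨X, h, rfl⟩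
theorem kL_le (h : CL S X) : kL S ≤ dltL S X := Nat.sInf_le ⟨X, h, rfl⟩

theorem fragR_exists (h : ∃ X, CR S X) : ∃ X, FragR S X := by
  obtain ⟨X, hX⟩ := h
  obtain ⟨Y, hY, hYd⟩ := Nat.sInf_mem (⟨dltR S X, X, hX, rfl⟩ : (dltR S '' setOf (CR S)).Nonempty)
  exact ⟨Y, hY, hYd⟩

theorem fragL_exists (h : ∃ X, CL S X) : ∃ X, FragL S X := by
  obtain ⟨X, hX⟩ := h
  obtain ⟨Y, hY, hYd⟩ := Nat.sInf_mem (⟨dltL S X, X, hX, rfl⟩ : (dltL S '' setOf (CL S)).Nonempty)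
  exact ⟨Y, hY, hYd⟩

theorem atomR_exists (h : ∃ X, CR S X) : ∃ X, AtomR S X := by
  obtain ⟨X, hX⟩ := fragR_exists h
  obtain ⟨Y, hY, hYd⟩ := Nat.sInf_mem
    (⟨finrank K X, X, hX, rfl⟩ :
      ((fun X : Submodule K L => finrank K X) '' setOf (FragR S)).Nonempty)
  exact ⟨Y, hY, hYd⟩

theorem atomL_exists (h : ∃ X, CL S X) : ∃ X, AtomL S X := by
  obtain ⟨X, hX⟩ := fragL_exists h
  obtain ⟨Y, hY, hYd⟩ := Nat.sInf_mem
    (⟨finrank K X, X, hX, rfl⟩ :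
      ((fun X : Submodule K L => finrank K X) '' setOf (FragL S)).Nonempty)
  exact ⟨Y, hY, hYd⟩

theorem dR_le (h : FragR S X) : dR S ≤ finrank K X := Nat.sInf_le ⟨X, h, rfl⟩
theorem dL_le (h : FragL S X) : dL S ≤ finrank K X := Nat.sInf_le ⟨X, h, rfl⟩


/-- left translation of a submodule -/
noncomputable def trL (u : L) (X : Submodule K L) : Submodule K L :=
  Submodule.map (LinearMap.mulLeft K u) X

noncomputable def trR (u : L) (X : Submodule K L) : Submodule K L :=
  Submodule.map (LinearMap.mulRight K u) X

/-- the linear equivalence given by left multiplication by a nonzero element -/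
noncomputable def mulLeftEquiv (u : L) (hu : u ≠ 0) : L ≃ₗ[K] L :=
  LinearEquiv.ofLinear (LinearMap.mulLeft K u) (LinearMap.mulLeft K u⁻¹)
    (by ext x; exact mul_inv_cancel_left₀ hu x)
    (by ext x; exact inv_mul_cancel_left₀ hu x)

noncomputable def mulRightEquiv (u : L) (hu : u ≠ 0) : L ≃ₗ[K] L :=
  LinearEquiv.ofLinear (LinearMap.mulRight K u) (LinearMap.mulRight K u⁻¹)
    (by ext x; exact inv_mul_cancel_right₀ hu x)
    (by ext x; exact mul_inv_cancel_right₀ hu x)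

theorem trL_eq_map_equiv (u : L) (hu : u ≠ 0) (X : Submodule K L) :
    trL u X = Submodule.map ((mulLeftEquiv u hu : L ≃ₗ[K] L) : L →ₗ[K] L) X := rfl

theorem trR_eq_map_equiv (u : L) (hu : u ≠ 0) (X : Submodule K L) :
    trR u X = Submodule.map ((mulRightEquiv u hu : L ≃ₗ[K] L) : L →ₗ[K] L) X := rfl

theorem trL_finrank (u : L) (hu : u ≠ 0) (X : Submodule K L) :
    finrank K (trL u X) = finrank K X := by
  rw [trL_eq_map_equiv u hu]
  exact LinearEquiv.finrank_map_eq _ _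

theorem trR_finrank (u : L) (hu : u ≠ 0) (X : Submodule K L) :
    finrank K (trR u X) = finrank K X := by
  rw [trR_eq_map_equiv u hu]
  exact LinearEquiv.finrank_map_eq _ _

theorem trL_inj (u : L) (hu : u ≠ 0) {X Y : Submodule K L} (h : trL u X = trL u Y) : X = Y := by
  rw [trL_eq_map_equiv u hu, trL_eq_map_equiv u hu] at h
  exact Submodule.map_injective_of_injective (mulLeftEquiv u hu).injective h

theorem trR_inj (u : L) (hu : u ≠ 0) {X Y : Submodule K L} (h : trR u X = trR u Y) : X = Y := by
  rw [trR_eq_map_equiv u hu, trR_eq_map_equiv u hu] at h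
  exact Submodule.map_injective_of_injective (mulRightEquiv u hu).injective h

theorem trL_bot (u : L) : trL (K := K) u (⊥ : Submodule K L) = ⊥ := Submodule.map_bot _
theorem trR_bot (u : L) : trR (K := K) u (⊥ : Submodule K L) = ⊥ := Submodule.map_bot _

theorem trL_top (u : L) (hu : u ≠ 0) : trL (K := K) u (⊤ : Submodule K L) = ⊤ := by
  rw [trL_eq_map_equiv u hu, Submodule.map_top, LinearEquiv.range]

theorem trR_top (u : L) (hu : u ≠ 0) : trR (K := K) u (⊤ : Submodule K L) = ⊤ := by
  rw [trR_eq_map_equiv u hu, Submodule.map_top, LinearEquiv.range]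

theorem trL_mul (u : L) (X S : Submodule K L) : trL u X * S = trL u (X * S) := by
  apply le_antisymm
  · rw [Submodule.mul_le]
    rintro m ⟨x, hx, rfl⟩ s hs
    exact ⟨x * s, Submodule.mul_mem_mul hx hs, by simp [LinearMap.mulLeft_apply, mul_assoc]⟩
  · show Submodule.map (LinearMap.mulLeft K u) (X * S) ≤ trL u X * S
    rw [Submodule.map_le_iff_le_comap, Submodule.mul_le]
    intro x hx s hs
    simp only [Submodule.mem_comap, LinearMap.mulLeft_apply]
    rw [← mul_assoc]
    exact Submodule.mul_mem_mul ⟨x, hx, rfl⟩ hs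

theorem trR_mul (u : L) (X S : Submodule K L) : S * trR u X = trR u (S * X) := by
  apply le_antisymm
  · rw [Submodule.mul_le]
    rintro s hs m ⟨x, hx, rfl⟩
    exact ⟨s * x, Submodule.mul_mem_mul hs hx, by simp [LinearMap.mulRight_apply, mul_assoc]⟩
  · show Submodule.map (LinearMap.mulRight K u) (S * X) ≤ S * trR u X
    rw [Submodule.map_le_iff_le_comap, Submodule.mul_le]
    intro s hs x hx
    simp only [Submodule.mem_comap, LinearMap.mulRight_apply]
    rw [mul_assoc]
    exact Submodule.mul_mem_mul hs ⟨x, hx, rfl⟩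

theorem trL_fg (u : L) {X : Submodule K L} (h : X.FG) : (trL u X).FG := h.map _
theorem trR_fg (u : L) {X : Submodule K L} (h : X.FG) : (trR u X).FG := h.map _

theorem CR_trL (u : L) (hu : u ≠ 0) (h : CR S X) : CR S (trL u X) := by
  obtain ⟨h0, hfg, htop⟩ := h
  refine ⟨fun hb => h0 (trL_inj u hu (by rw [hb, trL_bot])), trL_fg u hfg, fun ht => htop ?_⟩
  rw [trL_mul] at ht
  have := trL_inj u hu (show trL u (X * S) = trL u ⊤ by rw [ht, trL_top u hu])
  simpa using this

theorem CL_trR (u : L) (hu : u ≠ 0) (h : CL S X) : CL S (trR u X) := by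
  obtain ⟨h0, hfg, htop⟩ := h
  refine ⟨fun hb => h0 (trR_inj u hu (by rw [hb, trR_bot])), trR_fg u hfg, fun ht => htop ?_⟩
  rw [trR_mul] at ht
  have := trR_inj u hu (show trR u (S * X) = trR u ⊤ by rw [ht, trR_top u hu])
  simpa using this

theorem dltR_trL (u : L) (hu : u ≠ 0) : dltR S (trL u X) = dltR S X := by
  unfold dltR
  rw [trL_mul, trL_finrank u hu, trL_finrank u hu]

theorem dltL_trR (u : L) (hu : u ≠ 0) : dltL S (trR u X) = dltL S X := by
  unfold dltL
  rw [trR_mul, trR_finrank u hu, trR_finrank u hu]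

theorem atomR_trL (u : L) (hu : u ≠ 0) (h : AtomR S X) : AtomR S (trL u X) :=
  ⟨⟨CR_trL u hu h.1.1, by rw [dltR_trL u hu, h.1.2]⟩, by rw [trL_finrank u hu, h.2]⟩

theorem atomL_trR (u : L) (hu : u ≠ 0) (h : AtomL S X) : AtomL S (trR u X) :=
  ⟨⟨CL_trR u hu h.1.1, by rw [dltL_trR u hu, h.1.2]⟩, by rw [trR_finrank u hu, h.2]⟩

theorem fgInf {X Y : Submodule K L} (hX : X.FG) : (X ⊓ Y).FG := by
  haveI := fdOfFG hX
  exact (Submodule.fg_iff_finiteDimensional _).2 (Submodule.finiteDimensional_inf_left X Y)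

theorem fgSup {X Y : Submodule K L} (hX : X.FG) (hY : Y.FG) : (X ⊔ Y).FG := by
  haveI := fdOfFG hX; haveI := fdOfFG hY
  exact (Submodule.fg_iff_finiteDimensional _).2 (Submodule.finiteDimensional_sup X Y)

theorem fragR_inf (h1 : (1:L) ∈ S) (hS : S.FG) {X Y : Submodule K L}
    (hX : FragR S X) (hY : FragR S Y) (hne : X ⊓ Y ≠ ⊥) (htop : (X ⊔ Y) * S ≠ ⊤) :
    FragR S (X ⊓ Y) := by
  obtain ⟨⟨hX0, hXfg, hXS⟩, hXd⟩ := hX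
  obtain ⟨⟨hY0, hYfg, hYS⟩, hYd⟩ := hY
  have hZfg : (X ⊓ Y).FG := fgInf hXfg
  have hWfg : (X ⊔ Y).FG := fgSup hXfg hYfg
  have hCZ : CR S (X ⊓ Y) := by
    refine ⟨hne, hZfg, fun h => hXS (top_le_iff.1 ?_)⟩
    rw [← h]
    exact mul_le_mul' inf_le_left le_rfl
  have hCW : CR S (X ⊔ Y) := by
    refine ⟨fun h => hX0 (le_bot_iff.1 (h ▸ le_sup_left)), hWfg, htop⟩
  haveI := fdOfFG (hXfg.mul hS); haveI := fdOfFG (hYfg.mul hS)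
  have e1 : (X ⊔ Y) * S = X * S ⊔ Y * S := Submodule.sup_mul X Y S
  have e2 : finrank K ↥((X*S) ⊔ (Y*S)) + finrank K ↥((X*S) ⊓ (Y*S))
      = finrank K (X*S) + finrank K (Y*S) := Submodule.finrank_sup_add_finrank_inf_eq _ _
  have e3 : (X ⊓ Y) * S ≤ (X*S) ⊓ (Y*S) :=
    le_inf (mul_le_mul' inf_le_left le_rfl) (mul_le_mul' inf_le_right le_rfl)
  have e4 : finrank K ↥((X ⊓ Y) * S) ≤ finrank K ↥((X*S) ⊓ (Y*S)) := Submodule.finrank_mono e3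
  have e5 : finrank K ↥(X ⊔ Y) + finrank K ↥(X ⊓ Y) = finrank K X + finrank K Y := by
    haveI := fdOfFG hXfg; haveI := fdOfFG hYfg
    exact Submodule.finrank_sup_add_finrank_inf_eq X Y
  have sX := dltR_spec (X := X) h1 hS hXfg
  have sY := dltR_spec (X := Y) h1 hS hYfg
  have sZ := dltR_spec (X := X ⊓ Y) h1 hS hZfg
  have sW := dltR_spec (X := X ⊔ Y) h1 hS hWfg
  have kZ := kR_le hCZ
  have kW := kR_le hCW
  rw [e1] at sW
  refine ⟨hCZ, by omega⟩

theorem fragL_inf (h1 : (1:L) ∈ S) (hS : S.FG) {X Y : Submodule K L}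
    (hX : FragL S X) (hY : FragL S Y) (hne : X ⊓ Y ≠ ⊥) (htop : S * (X ⊔ Y) ≠ ⊤) :
    FragL S (X ⊓ Y) := by
  obtain ⟨⟨hX0, hXfg, hXS⟩, hXd⟩ := hX
  obtain ⟨⟨hY0, hYfg, hYS⟩, hYd⟩ := hY
  have hZfg : (X ⊓ Y).FG := fgInf hXfg
  have hWfg : (X ⊔ Y).FG := fgSup hXfg hYfg
  have hCZ : CL S (X ⊓ Y) := by
    refine ⟨hne, hZfg, fun h => hXS (top_le_iff.1 ?_)⟩
    rw [← h]
    exact mul_le_mul' le_rfl inf_le_left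
  have hCW : CL S (X ⊔ Y) := by
    refine ⟨fun h => hX0 (le_bot_iff.1 (h ▸ le_sup_left)), hWfg, htop⟩
  haveI := fdOfFG (hS.mul hXfg); haveI := fdOfFG (hS.mul hYfg)
  have e1 : S * (X ⊔ Y) = S * X ⊔ S * Y := Submodule.mul_sup S X Y
  have e2 : finrank K ↥((S*X) ⊔ (S*Y)) + finrank K ↥((S*X) ⊓ (S*Y))
      = finrank K (S*X) + finrank K (S*Y) := Submodule.finrank_sup_add_finrank_inf_eq _ _
  have e3 : S * (X ⊓ Y) ≤ (S*X) ⊓ (S*Y) :=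
    le_inf (mul_le_mul' le_rfl inf_le_left) (mul_le_mul' le_rfl inf_le_right)
  have e4 : finrank K ↥(S * (X ⊓ Y)) ≤ finrank K ↥((S*X) ⊓ (S*Y)) := Submodule.finrank_mono e3
  have e5 : finrank K ↥(X ⊔ Y) + finrank K ↥(X ⊓ Y) = finrank K X + finrank K Y := by
    haveI := fdOfFG hXfg; haveI := fdOfFG hYfg
    exact Submodule.finrank_sup_add_finrank_inf_eq X Y
  have sX := dltL_spec (X := X) h1 hS hXfg
  have sY := dltL_spec (X := Y) h1 hS hYfg
  have sZ := dltL_spec (X := X ⊓ Y) h1 hS hZfg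
  have sW := dltL_spec (X := X ⊔ Y) h1 hS hWfg
  have kZ := kL_le hCZ
  have kW := kL_le hCW
  rw [e1] at sW
  refine ⟨hCZ, by omega⟩

theorem atomR_eq (h1 : (1:L) ∈ S) (hS : S.FG) {X Y : Submodule K L}
    (hX : AtomR S X) (hY : AtomR S Y) (hne : X ⊓ Y ≠ ⊥) (htop : (X ⊔ Y) * S ≠ ⊤) :
    X = Y := by
  have hZ := fragR_inf h1 hS hX.1 hY.1 hne htop
  have hd := dR_le hZ
  haveI := fdOfFG hX.1.1.2.1
  haveI := fdOfFG hY.1.1.2.1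
  have e1 : X ⊓ Y = X := Submodule.eq_of_le_of_finrank_le inf_le_left (by rw [hX.2]; exact hd)
  have e2 : X ⊓ Y = Y := Submodule.eq_of_le_of_finrank_le inf_le_right (by rw [hY.2]; exact hd)
  rw [← e1, e2]

theorem atomL_eq (h1 : (1:L) ∈ S) (hS : S.FG) {X Y : Submodule K L}
    (hX : AtomL S X) (hY : AtomL S Y) (hne : X ⊓ Y ≠ ⊥) (htop : S * (X ⊔ Y) ≠ ⊤) :
    X = Y := by
  have hZ := fragL_inf h1 hS hX.1 hY.1 hne htop
  have hd := dL_le hZ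
  haveI := fdOfFG hX.1.1.2.1
  haveI := fdOfFG hY.1.1.2.1
  have e1 : X ⊓ Y = X := Submodule.eq_of_le_of_finrank_le inf_le_left (by rw [hX.2]; exact hd)
  have e2 : X ⊓ Y = Y := Submodule.eq_of_le_of_finrank_le inf_le_right (by rw [hY.2]; exact hd)
  rw [← e1, e2]

/-- the hypothesis of the theorem, in submodule form -/
def HypSub (K L : Type*) [Field K] [DivisionRing L] [Algebra K L] : Prop :=
  ∀ P : Submodule K L, (1 : L) ∈ P → P * P ≤ P → P.FG → P = 1 ∨ P = ⊤

theorem finrank_one_submodule : finrank K (1 : Submodule K L) = 1 := by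
  rw [Submodule.one_eq_span]
  exact finrank_span_singleton one_ne_zero

theorem masterR (hyp : HypSub K L) (h1 : (1:L) ∈ S) (hS : S.FG) (hne : ∃ X, CR S X)
    (hbad : ∀ X Y : Submodule K L,
      AtomR S X → AtomR S Y → X ⊓ Y ≠ ⊥ → (X ⊔ Y) * S ≠ ⊤) :
    kR S + 1 = finrank K S := by
  obtain ⟨A, hA⟩ := atomR_exists hne
  obtain ⟨a₀, ha₀A, ha₀⟩ := Submodule.exists_mem_ne_zero_of_ne_bot hA.1.1.1
  set A' := trL a₀⁻¹ A with hA'def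
  have hA' : AtomR S A' := atomR_trL _ (inv_ne_zero ha₀) hA
  have h1A' : (1:L) ∈ A' := ⟨a₀, ha₀A, inv_mul_cancel₀ ha₀⟩
  have hmul : A' * A' ≤ A' := by
    rw [Submodule.mul_le]
    intro x hx y hy
    rcases eq_or_ne x 0 with rfl | hx0
    · rw [zero_mul]; exact A'.zero_mem
    · have hAx : AtomR S (trL x A') := atomR_trL x hx0 hA'
      have hxmem : x ∈ trL x A' := ⟨1, h1A', mul_one x⟩
      have hne2 : trL x A' ⊓ A' ≠ ⊥ := by
        intro hb
        apply hx0
        have : x ∈ (⊥ : Submodule K L) := hb ▸ Submodule.mem_inf.2 ⟨hxmem, hx⟩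
        simpa using this
      have heq : trL x A' = A' := atomR_eq h1 hS hAx hA' hne2 (hbad _ _ hAx hA' hne2)
      exact heq ▸ ⟨y, hy, rfl⟩
  rcases hyp A' h1A' hmul hA'.1.1.2.1 with h1' | htop'
  · have hdlt := dltR_spec (X := A') h1 hS hA'.1.1.2.1
    rw [h1', Submodule.one_mul, finrank_one_submodule] at hdlt
    have := hA'.1.2
    rw [h1'] at this
    omega
  · exact absurd (by rw [htop', top_mulR h1]) hA'.1.1.2.2

theorem masterL (hyp : HypSub K L) (h1 : (1:L) ∈ S) (hS : S.FG) (hne : ∃ X, CL S X)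
    (hbad : ∀ X Y : Submodule K L,
      AtomL S X → AtomL S Y → X ⊓ Y ≠ ⊥ → S * (X ⊔ Y) ≠ ⊤) :
    kL S + 1 = finrank K S := by
  obtain ⟨A, hA⟩ := atomL_exists hne
  obtain ⟨a₀, ha₀A, ha₀⟩ := Submodule.exists_mem_ne_zero_of_ne_bot hA.1.1.1
  set A' := trR a₀⁻¹ A with hA'def
  have hA' : AtomL S A' := atomL_trR _ (inv_ne_zero ha₀) hA
  have h1A' : (1:L) ∈ A' := ⟨a₀, ha₀A, mul_inv_cancel₀ ha₀⟩
  have hmul : A' * A' ≤ A' := by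
    rw [Submodule.mul_le]
    intro x hx y hy
    rcases eq_or_ne y 0 with rfl | hy0
    · rw [mul_zero]; exact A'.zero_mem
    · have hAy : AtomL S (trR y A') := atomL_trR y hy0 hA'
      have hymem : y ∈ trR y A' := ⟨1, h1A', one_mul y⟩
      have hne2 : trR y A' ⊓ A' ≠ ⊥ := by
        intro hb
        apply hy0
        have : y ∈ (⊥ : Submodule K L) := hb ▸ Submodule.mem_inf.2 ⟨hymem, hy⟩
        simpa using this
      have heq : trR y A' = A' := atomL_eq h1 hS hAy hA' hne2 (hbad _ _ hAy hA' hne2)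
      exact heq ▸ ⟨x, hx, rfl⟩
  rcases hyp A' h1A' hmul hA'.1.1.2.1 with h1' | htop'
  · have hdlt := dltL_spec (X := A') h1 hS hA'.1.1.2.1
    rw [h1', Submodule.mul_one, finrank_one_submodule] at hdlt
    have := hA'.1.2
    rw [h1'] at this
    omega
  · exact absurd (by rw [htop', top_mulL h1]) hA'.1.1.2.2

theorem fd_of_top_fg (h : (⊤ : Submodule K L).FG) : FiniteDimensional K L := by
  haveI : Module.Finite K (⊤ : Submodule K L) := Module.Finite.iff_fg.2 h
  exact Module.Finite.equiv Submodule.topEquiv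

section FiniteCase
variable [FiniteDimensional K L]

theorem badR (h1 : (1:L) ∈ S) (hS : S.FG) {X Y : Submodule K L}
    (hX : FragR S X) (hY : FragR S Y) (hne : X ⊓ Y ≠ ⊥) (htop : (X ⊔ Y) * S = ⊤) :
    finrank K L ≤ finrank K ↥(X ⊔ Y) + kR S := by
  obtain ⟨⟨hX0, hXfg, hXS⟩, hXd⟩ := hX
  obtain ⟨⟨hY0, hYfg, hYS⟩, hYd⟩ := hY
  have hZfg : (X ⊓ Y).FG := fgInf hXfg
  have hCZ : CR S (X ⊓ Y) := by
    refine ⟨hne, hZfg, fun h => hXS (top_le_iff.1 ?_)⟩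
    rw [← h]
    exact mul_le_mul' inf_le_left le_rfl
  have e1 : X * S ⊔ Y * S = ⊤ := by rw [← Submodule.sup_mul]; exact htop
  have e2 : finrank K ↥((X*S) ⊔ (Y*S)) = finrank K L := by rw [e1]; exact finrank_top K L
  have e3 : finrank K ↥((X*S) ⊔ (Y*S)) + finrank K ↥((X*S) ⊓ (Y*S))
      = finrank K (X*S) + finrank K (Y*S) := Submodule.finrank_sup_add_finrank_inf_eq _ _
  have e4 : (X ⊓ Y) * S ≤ (X*S) ⊓ (Y*S) :=
    le_inf (mul_le_mul' inf_le_left le_rfl) (mul_le_mul' inf_le_right le_rfl)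
  have e5 : finrank K ↥((X ⊓ Y) * S) ≤ finrank K ↥((X*S) ⊓ (Y*S)) := Submodule.finrank_mono e4
  have e6 : finrank K ↥(X ⊔ Y) + finrank K ↥(X ⊓ Y) = finrank K X + finrank K Y :=
    Submodule.finrank_sup_add_finrank_inf_eq X Y
  have sX := dltR_spec (X := X) h1 hS hXfg
  have sY := dltR_spec (X := Y) h1 hS hYfg
  have sZ := dltR_spec (X := X ⊓ Y) h1 hS hZfg
  have kZ := kR_le hCZ
  omega

theorem badL (h1 : (1:L) ∈ S) (hS : S.FG) {X Y : Submodule K L}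
    (hX : FragL S X) (hY : FragL S Y) (hne : X ⊓ Y ≠ ⊥) (htop : S * (X ⊔ Y) = ⊤) :
    finrank K L ≤ finrank K ↥(X ⊔ Y) + kL S := by
  obtain ⟨⟨hX0, hXfg, hXS⟩, hXd⟩ := hX
  obtain ⟨⟨hY0, hYfg, hYS⟩, hYd⟩ := hY
  have hZfg : (X ⊓ Y).FG := fgInf hXfg
  have hCZ : CL S (X ⊓ Y) := by
    refine ⟨hne, hZfg, fun h => hXS (top_le_iff.1 ?_)⟩
    rw [← h]
    exact mul_le_mul' le_rfl inf_le_left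
  have e1 : S * X ⊔ S * Y = ⊤ := by rw [← Submodule.mul_sup]; exact htop
  have e2 : finrank K ↥((S*X) ⊔ (S*Y)) = finrank K L := by rw [e1]; exact finrank_top K L
  have e3 : finrank K ↥((S*X) ⊔ (S*Y)) + finrank K ↥((S*X) ⊓ (S*Y))
      = finrank K (S*X) + finrank K (S*Y) := Submodule.finrank_sup_add_finrank_inf_eq _ _
  have e4 : S * (X ⊓ Y) ≤ (S*X) ⊓ (S*Y) :=
    le_inf (mul_le_mul' le_rfl inf_le_left) (mul_le_mul' le_rfl inf_le_right)
  have e5 : finrank K ↥(S * (X ⊓ Y)) ≤ finrank K ↥((S*X) ⊓ (S*Y)) := Submodule.finrank_mono e4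
  have e6 : finrank K ↥(X ⊔ Y) + finrank K ↥(X ⊓ Y) = finrank K X + finrank K Y :=
    Submodule.finrank_sup_add_finrank_inf_eq X Y
  have sX := dltL_spec (X := X) h1 hS hXfg
  have sY := dltL_spec (X := Y) h1 hS hYfg
  have sZ := dltL_spec (X := X ⊓ Y) h1 hS hZfg
  have kZ := kL_le hCZ
  omega

variable {τ : Module.Dual K L}

/-- `q ↦ τ (q * y)` as a linear function of `y`. -/
noncomputable def phiR (τ : Module.Dual K L) : L →ₗ[K] Module.Dual K L :=
  (LinearMap.llcomp K L L K τ).comp (LinearMap.mul K L).flip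

/-- `q ↦ τ (y * q)` as a linear function of `y`. -/
noncomputable def phiL (τ : Module.Dual K L) : L →ₗ[K] Module.Dual K L :=
  (LinearMap.llcomp K L L K τ).comp (LinearMap.mul K L)

@[simp] theorem phiR_apply (y q : L) : phiR τ y q = τ (q * y) := rfl
@[simp] theorem phiL_apply (y q : L) : phiL τ y q = τ (y * q) := rfl

theorem phiR_inj (hτ : τ ≠ 0) : Function.Injective (phiR τ) := by
  rw [injective_iff_map_eq_zero]
  intro y hy
  by_contra hy0
  apply hτ
  ext z
  have := congrFun (congrArg DFunLike.coe hy) (z * y⁻¹)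
  simpa [mul_assoc, inv_mul_cancel₀ hy0] using this

theorem phiL_inj (hτ : τ ≠ 0) : Function.Injective (phiL τ) := by
  rw [injective_iff_map_eq_zero]
  intro y hy
  by_contra hy0
  apply hτ
  ext z
  have := congrFun (congrArg DFunLike.coe hy) (y⁻¹ * z)
  simpa [← mul_assoc, mul_inv_cancel₀ hy0] using this

/-- right perp -/
noncomputable def rperp (τ : Module.Dual K L) (Q : Submodule K L) : Submodule K L :=
  Submodule.comap (phiR τ) Q.dualAnnihilator

noncomputable def lperp (τ : Module.Dual K L) (Q : Submodule K L) : Submodule K L :=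
  Submodule.comap (phiL τ) Q.dualAnnihilator

theorem mem_rperp {Q : Submodule K L} {y : L} :
    y ∈ rperp τ Q ↔ ∀ q ∈ Q, τ (q * y) = 0 := by
  simp [rperp, Submodule.mem_comap, Submodule.mem_dualAnnihilator]

theorem mem_lperp {Q : Submodule K L} {y : L} :
    y ∈ lperp τ Q ↔ ∀ q ∈ Q, τ (y * q) = 0 := by
  simp [lperp, Submodule.mem_comap, Submodule.mem_dualAnnihilator]

theorem finrank_rperp (hτ : τ ≠ 0) (Q : Submodule K L) :
    finrank K (rperp τ Q) + finrank K Q = finrank K L := by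
  have hdim : finrank K L = finrank K (Module.Dual K L) := (Subspace.dual_finrank_eq).symm
  let e := (phiR τ).linearEquivOfInjective (phiR_inj hτ) hdim
  have he : (phiR τ) = (e : L →ₗ[K] Module.Dual K L) := by
    ext y q; simp [e, LinearMap.linearEquivOfInjective_apply]
  have h1 : rperp τ Q = Submodule.map (e.symm : Module.Dual K L →ₗ[K] L) Q.dualAnnihilator := by
    rw [rperp, he, Submodule.comap_equiv_eq_map_symm]
  rw [h1, LinearEquiv.finrank_map_eq]
  have h2 : finrank K Q.dualAnnihilator = finrank K (L ⧸ Q) :=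
    (LinearEquiv.finrank_eq (Subspace.quotEquivAnnihilator Q)).symm
  rw [h2, Submodule.finrank_quotient_add_finrank]

theorem finrank_lperp (hτ : τ ≠ 0) (Q : Submodule K L) :
    finrank K (lperp τ Q) + finrank K Q = finrank K L := by
  have hdim : finrank K L = finrank K (Module.Dual K L) := (Subspace.dual_finrank_eq).symm
  let e := (phiL τ).linearEquivOfInjective (phiL_inj hτ) hdim
  have he : (phiL τ) = (e : L →ₗ[K] Module.Dual K L) := by
    ext y q; simp [e, LinearMap.linearEquivOfInjective_apply]
  have h1 : lperp τ Q = Submodule.map (e.symm : Module.Dual K L →ₗ[K] L) Q.dualAnnihilator := by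
    rw [lperp, he, Submodule.comap_equiv_eq_map_symm]
  rw [h1, LinearEquiv.finrank_map_eq]
  have h2 : finrank K Q.dualAnnihilator = finrank K (L ⧸ Q) :=
    (LinearEquiv.finrank_eq (Subspace.quotEquivAnnihilator Q)).symm
  rw [h2, Submodule.finrank_quotient_add_finrank]

theorem smul_rperp_le {F : Submodule K L} : S * rperp τ (F * S) ≤ rperp τ F := by
  rw [Submodule.mul_le]
  intro s hs y hy
  rw [mem_rperp]
  intro q hq
  rw [← mul_assoc]
  exact (mem_rperp.1 hy) (q * s) (Submodule.mul_mem_mul hq hs)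

theorem lperp_mul_le {G : Submodule K L} : lperp τ (S * G) * S ≤ lperp τ G := by
  rw [Submodule.mul_le]
  intro y hy s hs
  rw [mem_lperp]
  intro q hq
  rw [mul_assoc]
  exact (mem_lperp.1 hy) (s * q) (Submodule.mul_mem_mul hs hq)

theorem ne_bot_of_finrank_pos {X : Submodule K L} (h : 0 < finrank K X) : X ≠ ⊥ := by
  intro hb
  rw [hb] at h
  simp [finrank_bot] at h

theorem finrank_pos_of_ne_bot {X : Submodule K L} (h : X ≠ ⊥) : 0 < finrank K X := by
  rcases Nat.eq_zero_or_pos (finrank K X) with h0 | h0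
  · exact absurd (Submodule.finrank_eq_zero.1 h0) h
  · exact h0

/-- from a right fragment we obtain a left constraint class member with no larger delta -/
theorem dual_kLR (hτ : τ ≠ 0) (h1 : (1:L) ∈ S) (hS : S.FG) (hne : ∃ X, CR S X) :
    (∃ Y, CL S Y) ∧ kL S ≤ kR S := by
  obtain ⟨F, ⟨⟨hF0, hFfg, hFS⟩, hFd⟩⟩ := fragR_exists hne
  set G := rperp τ (F * S) with hGdef
  have hGrank : finrank K G + finrank K (F * S) = finrank K L := finrank_rperp hτ _
  have hFSlt : finrank K (F * S) < finrank K L := Submodule.finrank_lt hFS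
  have hG0 : G ≠ ⊥ := ne_bot_of_finrank_pos (by omega)
  have hGfg : G.FG := (Submodule.fg_iff_finiteDimensional G).2 inferInstance
  have hSG : S * G ≤ rperp τ F := smul_rperp_le
  have hrF : finrank K (rperp τ F) + finrank K F = finrank K L := finrank_rperp hτ F
  have hFpos : 0 < finrank K F := finrank_pos_of_ne_bot hF0
  have hSGtop : S * G ≠ ⊤ := by
    intro h
    have : finrank K (rperp τ F) = finrank K L := by
      have hle : (⊤ : Submodule K L) ≤ rperp τ F := h ▸ hSG
      have := Submodule.finrank_mono hle
      rw [finrank_top] at this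
      have h2 := Submodule.finrank_le (rperp τ F)
      omega
    omega
  have hCLG : CL S G := ⟨hG0, hGfg, hSGtop⟩
  have hSGle : finrank K (S * G) ≤ finrank K (rperp τ F) := Submodule.finrank_mono hSG
  have sG := dltL_spec (X := G) h1 hS hGfg
  have sF := dltR_spec (X := F) h1 hS hFfg
  have hkL := kL_le hCLG
  refine ⟨⟨G, hCLG⟩, ?_⟩
  omega

theorem dual_kRL (hτ : τ ≠ 0) (h1 : (1:L) ∈ S) (hS : S.FG) (hne : ∃ Y, CL S Y) :
    (∃ X, CR S X) ∧ kR S ≤ kL S := by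
  obtain ⟨G, ⟨⟨hG0, hGfg, hGS⟩, hGd⟩⟩ := fragL_exists hne
  set F := lperp τ (S * G) with hFdef
  have hFrank : finrank K F + finrank K (S * G) = finrank K L := finrank_lperp hτ _
  have hSGlt : finrank K (S * G) < finrank K L := Submodule.finrank_lt hGS
  have hF0 : F ≠ ⊥ := ne_bot_of_finrank_pos (by omega)
  have hFfg : F.FG := (Submodule.fg_iff_finiteDimensional F).2 inferInstance
  have hFS : F * S ≤ lperp τ G := lperp_mul_le
  have hrG : finrank K (lperp τ G) + finrank K G = finrank K L := finrank_lperp hτ G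
  have hGpos : 0 < finrank K G := finrank_pos_of_ne_bot hG0
  have hFStop : F * S ≠ ⊤ := by
    intro h
    have : finrank K (lperp τ G) = finrank K L := by
      have hle : (⊤ : Submodule K L) ≤ lperp τ G := h ▸ hFS
      have := Submodule.finrank_mono hle
      rw [finrank_top] at this
      have h2 := Submodule.finrank_le (lperp τ G)
      omega
    omega
  have hCRF : CR S F := ⟨hF0, hFfg, hFStop⟩
  have hFSle : finrank K (F * S) ≤ finrank K (lperp τ G) := Submodule.finrank_mono hFS
  have sF := dltR_spec (X := F) h1 hS hFfg
  have sG := dltL_spec (X := G) h1 hS hGfg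
  have hkR := kR_le hCRF
  refine ⟨⟨F, hCRF⟩, ?_⟩
  omega

theorem dual_d (hτ : τ ≠ 0) (h1 : (1:L) ∈ S) (hS : S.FG) (hne : ∃ X, CR S X)
    (hkeq : kL S = kR S) : dL S + kR S + dR S ≤ finrank K L := by
  obtain ⟨F, hF⟩ := atomR_exists hne
  obtain ⟨⟨hF0, hFfg, hFS⟩, hFd⟩ := hF.1
  set G := rperp τ (F * S) with hGdef
  have hGrank : finrank K G + finrank K (F * S) = finrank K L := finrank_rperp hτ _
  have hFSlt : finrank K (F * S) < finrank K L := Submodule.finrank_lt hFS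
  have hG0 : G ≠ ⊥ := ne_bot_of_finrank_pos (by omega)
  have hGfg : G.FG := (Submodule.fg_iff_finiteDimensional G).2 inferInstance
  have hSG : S * G ≤ rperp τ F := smul_rperp_le
  have hrF : finrank K (rperp τ F) + finrank K F = finrank K L := finrank_rperp hτ F
  have hFpos : 0 < finrank K F := finrank_pos_of_ne_bot hF0
  have hSGtop : S * G ≠ ⊤ := by
    intro h
    have : finrank K (rperp τ F) = finrank K L := by
      have hle : (⊤ : Submodule K L) ≤ rperp τ F := h ▸ hSG
      have := Submodule.finrank_mono hle
      rw [finrank_top] at this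
      have h2 := Submodule.finrank_le (rperp τ F)
      omega
    omega
  have hCLG : CL S G := ⟨hG0, hGfg, hSGtop⟩
  have hSGle : finrank K (S * G) ≤ finrank K (rperp τ F) := Submodule.finrank_mono hSG
  have sG := dltL_spec (X := G) h1 hS hGfg
  have sF := dltR_spec (X := F) h1 hS hFfg
  have hkL := kL_le hCLG
  -- dltL G = kL S, so G is a left fragment
  have hfragG : FragL S G := ⟨hCLG, by omega⟩
  have hdL := dL_le hfragG
  have hatom := hF.2
  omega

end FiniteCase

theorem exists_tau [FiniteDimensional K L] : ∃ τ : Module.Dual K L, τ ≠ 0 := by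
  have h1 : 0 < finrank K (Module.Dual K L) := by
    rw [Subspace.dual_finrank_eq]
    exact finrank_pos
  haveI : Nontrivial (Module.Dual K L) := Module.nontrivial_of_finrank_pos h1
  exact exists_ne 0

theorem kR_eq (hyp : HypSub K L) (h1 : (1:L) ∈ S) (hS : S.FG) (hne : ∃ X, CR S X) :
    kR S + 1 = finrank K S := by
  by_cases hfd : FiniteDimensional K L
  · obtain ⟨τ, hτ⟩ := exists_tau (K := K) (L := L)
    obtain ⟨hneL, hkLR⟩ := dual_kLR hτ h1 hS hne
    obtain ⟨_, hkRL⟩ := dual_kRL hτ h1 hS hneL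
    have hkeq : kL S = kR S := le_antisymm hkLR hkRL
    have hd : dL S + kR S + dR S ≤ finrank K L := dual_d hτ h1 hS hne hkeq
    by_cases hdle : dR S ≤ dL S
    · refine masterR hyp h1 hS hne ?_
      intro X Y hAX hAY hine htop
      have hb := badR h1 hS hAX.1 hAY.1 hine htop
      have e6 : finrank K ↥(X ⊔ Y) + finrank K ↥(X ⊓ Y) = finrank K X + finrank K Y := by
        haveI := fdOfFG hAX.1.1.2.1; haveI := fdOfFG hAY.1.1.2.1
        exact Submodule.finrank_sup_add_finrank_inf_eq X Y
      have hpos : 0 < finrank K ↥(X ⊓ Y) := finrank_pos_of_ne_bot hine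
      have hdX := hAX.2
      have hdY := hAY.2
      omega
    · have hL : kL S + 1 = finrank K S := by
        refine masterL hyp h1 hS hneL ?_
        intro X Y hAX hAY hine htop
        have hb := badL h1 hS hAX.1 hAY.1 hine htop
        have e6 : finrank K ↥(X ⊔ Y) + finrank K ↥(X ⊓ Y) = finrank K X + finrank K Y := by
          haveI := fdOfFG hAX.1.1.2.1; haveI := fdOfFG hAY.1.1.2.1
          exact Submodule.finrank_sup_add_finrank_inf_eq X Y
        have hpos : 0 < finrank K ↥(X ⊓ Y) := finrank_pos_of_ne_bot hine
        have hdX := hAX.2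
        have hdY := hAY.2
        omega
      omega
  · refine masterR hyp h1 hS hne ?_
    intro X Y hAX hAY hine htop
    have hfgW : ((X ⊔ Y) * S).FG := (fgSup hAX.1.1.2.1 hAY.1.1.2.1).mul hS
    rw [htop] at hfgW
    exact hfd (fd_of_top_fg hfgW)

/-- The linear Kneser-type theorem with trivial stabilizers. -/
theorem kneser (hyp : HypSub K L) {S X : Submodule K L} (h1 : (1:L) ∈ S) (hS : S.FG)
    (hX0 : X ≠ ⊥) (hXfg : X.FG) (hXS : X * S ≠ ⊤) :
    finrank K X + finrank K S ≤ finrank K (X * S) + 1 := by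
  have hCX : CR S X := ⟨hX0, hXfg, hXS⟩
  have hk := kR_eq hyp h1 hS ⟨X, hCX⟩
  have hle := kR_le hCX
  have spec := dltR_spec h1 hS hXfg
  omega



end Machinery

section Rado
variable {K : Type*} [Field K]

theorem map_finset_sup {ι V W : Type*} [AddCommGroup V] [Module K V] [AddCommGroup W]
    [Module K W] (f : V →ₗ[K] W) (t : Finset ι) (U : ι → Submodule K V) :
    (t.sup U).map f = t.sup (fun i => (U i).map f) := by
  classical
  induction t using Finset.cons_induction with
  | empty => simp
  | cons i t hi ih => simp [Finset.sup_cons, Submodule.map_sup, ih]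

theorem finrank_map_quot {V : Type*} [AddCommGroup V] [Module K V] (u : V)
    (Z : Submodule K V) [FiniteDimensional K Z] :
    finrank K (Z.map (Submodule.mkQ (span K {u})))
      + finrank K ↥((span K {u}) ⊓ Z) = finrank K Z := by
  set π := Submodule.mkQ (span K {u})
  let f := π.comp Z.subtype
  have hrange : LinearMap.range f = Z.map π := by
    rw [LinearMap.range_comp, Submodule.range_subtype]
  have hker : LinearMap.ker f = Submodule.comap Z.subtype ((span K {u}) ⊓ Z) := by
    rw [LinearMap.ker_comp, Submodule.ker_mkQ]
    ext x
    simp [Submodule.mem_comap]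
  have e1 : finrank K (LinearMap.range f) + finrank K (LinearMap.ker f) = finrank K Z :=
    LinearMap.finrank_range_add_finrank_ker f
  have e2 : finrank K (LinearMap.ker f) = finrank K ↥((span K {u}) ⊓ Z) := by
    rw [hker]
    exact LinearEquiv.finrank_eq (Submodule.comapSubtypeEquivOfLe inf_le_right)
  rw [hrange, e2] at e1
  exact e1

/-- Rado's theorem for vector spaces: a system of subspaces satisfying the Hall-type
rank condition admits a system of linearly independent representatives. -/
theorem rado (n : ℕ) : ∀ {ι : Type*} (s : Finset ι), s.card = n →
    ∀ (V : Type*) [AddCommGroup V] [Module K V] (U : ι → Submodule K V),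
    (∀ i, FiniteDimensional K (U i)) →
    (∀ t ⊆ s, t.card ≤ finrank K ↥(t.sup U)) →
    ∃ v : ι → V, (∀ i ∈ s, v i ∈ U i) ∧
      ∀ c : ι → K, (∑ i ∈ s, c i • v i) = 0 → ∀ i ∈ s, c i = 0 := by
  induction n with
  | zero =>
    intro ι s hcard V _ _ U _ _
    rw [Finset.card_eq_zero] at hcard
    subst hcard
    exact ⟨fun _ => 0, by simp, by simp⟩
  | succ m ih =>
    intro ι s hcard V _ _ U hfd hall
    classical
    have hs : s.Nonempty := Finset.card_pos.1 (by omega)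
    obtain ⟨i₀, hi₀⟩ := hs
    set s' := s.erase i₀ with hs'def
    have hs'card : s'.card = m := by
      rw [hs'def, Finset.card_erase_of_mem hi₀]; omega
    have hs'sub : s' ⊆ s := Finset.erase_subset i₀ s
    -- tight sets
    haveI : ∀ t : Finset ι, FiniteDimensional K ↥(t.sup U) := fun t =>
      Submodule.finiteDimensional_finset_sup t U
    have htight_union : ∀ t₁ t₂ : Finset ι, t₁ ⊆ s' → t₂ ⊆ s' →
        finrank K ↥(t₁.sup U) = t₁.card → finrank K ↥(t₂.sup U) = t₂.card →
        finrank K ↥((t₁ ∪ t₂).sup U) = (t₁ ∪ t₂).card := by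
      intro t₁ t₂ h₁ h₂ ht₁ ht₂
      have e1 : (t₁ ∪ t₂).sup U = t₁.sup U ⊔ t₂.sup U := Finset.sup_union
      have e2 : finrank K ↥(t₁.sup U ⊔ t₂.sup U) + finrank K ↥(t₁.sup U ⊓ t₂.sup U)
          = finrank K ↥(t₁.sup U) + finrank K ↥(t₂.sup U) :=
        Submodule.finrank_sup_add_finrank_inf_eq _ _
      have e3 : (t₁ ∩ t₂).sup U ≤ t₁.sup U ⊓ t₂.sup U :=
        le_inf (Finset.sup_mono Finset.inter_subset_left)
          (Finset.sup_mono Finset.inter_subset_right)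
      have e4 : finrank K ↥((t₁ ∩ t₂).sup U) ≤ finrank K ↥(t₁.sup U ⊓ t₂.sup U) :=
        Submodule.finrank_mono e3
      have h5 := hall (t₁ ∪ t₂) (Finset.union_subset (h₁.trans hs'sub) (h₂.trans hs'sub))
      have h6 := hall (t₁ ∩ t₂) ((Finset.inter_subset_left).trans (h₁.trans hs'sub))
      have h7 : t₁.card + t₂.card = (t₁ ∪ t₂).card + (t₁ ∩ t₂).card :=
        (Finset.card_union_add_card_inter t₁ t₂).symm
      rw [e1] at h5 ⊢
      omega
    -- the union of all tight subsets of s'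
    set C : Finset (Finset ι) := s'.powerset.filter (fun t => finrank K ↥(t.sup U) = t.card)
      with hCdef
    set tstar : Finset ι := C.sup id with htstar
    have htstar_sub : tstar ⊆ s' := by
      intro x hx
      rw [htstar] at hx
      obtain ⟨t, htC, hxt⟩ := Finset.mem_sup.1 hx
      rw [hCdef, Finset.mem_filter, Finset.mem_powerset] at htC
      exact htC.1 hxt
    have htstar_tight : finrank K ↥(tstar.sup U) = tstar.card := by
      rw [htstar]
      have main : ∀ D : Finset (Finset ι),
          (∀ t ∈ D, t ⊆ s' ∧ finrank K ↥(t.sup U) = t.card) →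
          (D.sup id ⊆ s' ∧ finrank K ↥((D.sup id).sup U) = (D.sup id).card) := by
        intro D
        induction D using Finset.cons_induction with
        | empty =>
          intro _
          refine ⟨by simp, by simp⟩
        | cons t D ht ihD =>
          intro hD
          have h1 := hD t (Finset.mem_cons_self t D)
          have h2 := ihD (fun t' ht' => hD t' (Finset.mem_cons_of_mem ht'))
          have h3 := htight_union t (D.sup id) h1.1 h2.1 h1.2 h2.2
          constructor
          · rw [Finset.sup_cons, Finset.sup_eq_union]
            exact Finset.union_subset h1.1 h2.1
          · rw [Finset.sup_cons, Finset.sup_eq_union]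
            exact h3
      refine (main C ?_).2
      intro t ht
      rw [hCdef, Finset.mem_filter, Finset.mem_powerset] at ht
      exact ⟨ht.1, ht.2⟩
    have htight_le : ∀ t, t ⊆ s' → finrank K ↥(t.sup U) = t.card → t ⊆ tstar := by
      intro t hts htt x hx
      rw [htstar]
      refine Finset.mem_sup.2 ⟨t, ?_, hx⟩
      rw [hCdef, Finset.mem_filter, Finset.mem_powerset]
      exact ⟨hts, htt⟩
    -- find u ∈ U i₀ outside tstar.sup U
    have hnotle : ¬ (U i₀ ≤ tstar.sup U) := by
      intro hle
      have hsub2 : insert i₀ tstar ⊆ s := Finset.insert_subset hi₀ (htstar_sub.trans hs'sub)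
      have h8 := hall (insert i₀ tstar) hsub2
      have e1 : (insert i₀ tstar).sup U = U i₀ ⊔ tstar.sup U := Finset.sup_insert
      have e2 : U i₀ ⊔ tstar.sup U = tstar.sup U := sup_eq_right.2 hle
      have hcard2 : (insert i₀ tstar).card = tstar.card + 1 := by
        rw [Finset.card_insert_of_notMem]
        intro hmem
        exact (Finset.notMem_erase i₀ s) (htstar_sub hmem)
      rw [e1, e2, hcard2] at h8
      omega
    obtain ⟨u, huU, hunot⟩ := SetLike.not_le_iff_exists.1 hnotle
    have hu0 : u ≠ 0 := fun h => hunot (h ▸ (tstar.sup U).zero_mem)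
    -- quotient space
    set π := Submodule.mkQ (span K {u}) with hπ
    set U' : ι → Submodule K (V ⧸ span K {u}) := fun i => (U i).map π with hU'
    have hfd' : ∀ i, FiniteDimensional K (U' i) := by
      intro i
      rw [hU']
      exact (Submodule.fg_iff_finiteDimensional _).1
        (Submodule.FG.map _ ((Submodule.fg_iff_finiteDimensional (U i)).2 (hfd i)))
    have hall' : ∀ t ⊆ s', t.card ≤ finrank K ↥(t.sup U') := by
      intro t hts
      have emap : t.sup U' = (t.sup U).map π := (map_finset_sup π t U).symm
      have erk := finrank_map_quot u (t.sup U)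
      rw [← hπ] at erk
      have h9 := hall t (hts.trans hs'sub)
      by_cases htt : finrank K ↥(t.sup U) = t.card
      · -- u ∉ t.sup U hence the kernel part is trivial
        have hle2 : t.sup U ≤ tstar.sup U := Finset.sup_mono (htight_le t hts htt)
        have hul : u ∉ t.sup U := fun hmem => hunot (hle2 hmem)
        have hinf : (span K {u}) ⊓ t.sup U = ⊥ := by
          rw [eq_bot_iff]
          rintro x ⟨hx1, hx2⟩
          obtain ⟨c, rfl⟩ := Submodule.mem_span_singleton.1 hx1
          rcases eq_or_ne c 0 with rfl | hc
          · simp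
          · exfalso
            apply hul
            have : c⁻¹ • (c • u) ∈ t.sup U := Submodule.smul_mem _ _ hx2
            rwa [smul_smul, inv_mul_cancel₀ hc, one_smul] at this
        rw [hinf] at erk
        rw [emap]
        simp only [finrank_bot] at erk
        omega
      · -- strict inequality
        have h10 : t.card + 1 ≤ finrank K ↥(t.sup U) := by
          have : finrank K ↥(t.sup U) ≠ t.card := htt
          omega
        have h11 : finrank K ↥((span K {u}) ⊓ t.sup U) ≤ 1 := by
          have := Submodule.finrank_mono (inf_le_left :
            (span K {u}) ⊓ t.sup U ≤ span K {u})
          rwa [finrank_span_singleton hu0] at this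
        rw [emap]
        omega
    obtain ⟨w', hw'mem, hw'ind⟩ := ih s' hs'card (V ⧸ span K {u}) U' hfd' hall'
    -- lift
    have hlift : ∀ i ∈ s', ∃ x, x ∈ U i ∧ π x = w' i := by
      intro i hi
      have := hw'mem i hi
      rw [hU'] at this
      obtain ⟨x, hx1, hx2⟩ := this
      exact ⟨x, hx1, hx2⟩
    choose w hw1 hw2 using hlift
    set v : ι → V := fun i => if h : i ∈ s' then w i h else u with hv
    refine ⟨v, ?_, ?_⟩
    · intro i hi
      rw [hv]
      by_cases h : i ∈ s'
      · simp only [h, dif_pos]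
        exact hw1 i h
      · have : i = i₀ := by
          by_contra hne
          exact h (Finset.mem_erase.2 ⟨hne, hi⟩)
        simp only [h, dif_neg, not_false_iff]
        rw [this]
        exact huU
    · intro c hsum i hi
      have hsum2 : c i₀ • u + ∑ j ∈ s', c j • v j = 0 := by
        rw [← hsum, ← Finset.add_sum_erase s (fun j => c j • v j) hi₀]
        congr 1
        rw [hv]
        have hni : i₀ ∉ s' := Finset.notMem_erase i₀ s
        simp [hni]
      have hπsum : ∑ j ∈ s', c j • w' j = 0 := by
        have := congrArg π hsum2
        rw [map_add, map_sum, map_smul] at this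
        have hπu : π u = 0 := by
          rw [hπ, Submodule.mkQ_apply, Submodule.Quotient.mk_eq_zero]
          exact Submodule.mem_span_singleton_self u
        rw [hπu, smul_zero, zero_add, map_zero] at this
        rw [← this]
        apply Finset.sum_congr rfl
        intro j hj
        rw [map_smul, hv]
        simp only [hj, dif_pos]
        rw [hw2 j hj]
      have hczero : ∀ j ∈ s', c j = 0 := hw'ind c hπsum
      by_cases h : i ∈ s'
      · exact hczero i h
      · have hii : i = i₀ := by
          by_contra hne
          exact h (Finset.mem_erase.2 ⟨hne, hi⟩)
        subst hii
        have : ∑ j ∈ s', c j • v j = 0 := by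
          apply Finset.sum_eq_zero
          intro j hj
          rw [hczero j hj, zero_smul]
        rw [this, add_zero] at hsum2
        rcases smul_eq_zero.1 hsum2 with hc | hu
        · exact hc
        · exact absurd hu hu0


theorem sup_dualAnnihilator {V : Type*} [AddCommGroup V] [Module K V] [FiniteDimensional K V]
    {n : ℕ} (S' : Fin n → Submodule K V) (t : Finset (Fin n)) :
    t.sup (fun i => (S' i).dualAnnihilator) = (t.inf S').dualAnnihilator := by
  classical
  induction t using Finset.cons_induction with
  | empty => simp [Submodule.dualAnnihilator_top]
  | cons i t hi ihd =>
    rw [Finset.sup_cons, Finset.inf_cons, ihd, Subspace.dualAnnihilator_inf_eq]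

theorem finrank_dualAnnihilator {V : Type*} [AddCommGroup V] [Module K V]
    [FiniteDimensional K V] (W : Submodule K V) :
    finrank K W.dualAnnihilator + finrank K W = finrank K V := by
  have h2 : finrank K W.dualAnnihilator = finrank K (V ⧸ W) :=
    (LinearEquiv.finrank_eq (Subspace.quotEquivAnnihilator W)).symm
  rw [h2, Submodule.finrank_quotient_add_finrank]

/-- Basis selection: if the subspaces `S' i` of the `n`-dimensional space `V` satisfy the
co-Hall condition, there is a basis `b` with `S' i` contained in the span of the
basis vectors other than `b i`. -/
theorem basis_selection {V : Type*} [AddCommGroup V] [Module K V] [FiniteDimensional K V]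
    {n : ℕ} (hn0 : 0 < n) (hn : finrank K V = n) (S' : Fin n → Submodule K V)
    (hall : ∀ I : Finset (Fin n), finrank K ↥(I.inf S') + I.card ≤ n) :
    ∃ b : Fin n → V, LinearIndependent K b ∧ span K (Set.range b) = ⊤ ∧
      ∀ i, S' i ≤ span K (b '' {j | j ≠ i}) := by
  classical
  -- apply Rado in the dual space
  have hradoHall : ∀ t ⊆ (Finset.univ : Finset (Fin n)), t.card ≤
      finrank K ↥(t.sup (fun i => (S' i).dualAnnihilator)) := by
    intro t _
    rw [sup_dualAnnihilator]
    have h1 := finrank_dualAnnihilator (t.inf S')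
    have h2 := hall t
    omega
  obtain ⟨w, hwmem, hwind⟩ := rado (K := K) n Finset.univ (by simp) (Module.Dual K V)
    (fun i => (S' i).dualAnnihilator) (fun i => inferInstance) hradoHall
  have hwli : LinearIndependent K w := by
    rw [Fintype.linearIndependent_iff]
    intro c hc i
    exact hwind c hc i (Finset.mem_univ i)
  have hcard : Fintype.card (Fin n) = finrank K (Module.Dual K V) := by
    rw [Subspace.dual_finrank_eq, hn, Fintype.card_fin]
  haveI : Nonempty (Fin n) := ⟨⟨0, hn0⟩⟩
  let Φ : Basis (Fin n) K (Module.Dual K V) :=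
    basisOfLinearIndependentOfCardEqFinrank hwli hcard
  have hΦ : ∀ i, Φ i = w i := fun i => by
    simp [Φ, coe_basisOfLinearIndependentOfCardEqFinrank]
  let b : Basis (Fin n) K V := Φ.dualBasis.map (Module.evalEquiv K V).symm
  have hrepr : ∀ (x : V) (i : Fin n), b.repr x i = w i x := by
    intro x i
    rw [show b.repr x = Φ.dualBasis.repr (Module.evalEquiv K V x) from by
      simp [b, Basis.map_repr]]
    rw [Basis.dualBasis_repr, hΦ]
    simp [Module.evalEquiv_apply]
  refine ⟨b, b.linearIndependent, b.span_eq, ?_⟩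
  intro i x hx
  rw [Basis.mem_span_image]
  intro j hj
  rw [Finset.mem_coe, Finsupp.mem_support_iff] at hj
  simp only [Set.mem_setOf_eq]
  intro hji
  apply hj
  rw [hji, hrepr]
  have := hwmem i (Finset.mem_univ i)
  rw [Submodule.mem_dualAnnihilator] at this
  exact this x hx


end Rado

section Main
variable {K L : Type*} [Field K] [DivisionRing L] [Algebra K L]


theorem hypSub_of_subalg
    (h : ∀ M : Subalgebra K L, (∀ x ∈ M, x⁻¹ ∈ M) → FiniteDimensional K M → (M = ⊥ ∨ M = ⊤)) :
    HypSub K L := by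
  intro P h1 hmul hfg
  haveI : FiniteDimensional K P := (Submodule.fg_iff_finiteDimensional P).1 hfg
  set M : Subalgebra K L :=
    { carrier := P
      mul_mem' := fun ha hb => hmul (mul_mem_mul ha hb)
      one_mem' := h1
      zero_mem' := P.zero_mem
      add_mem' := fun ha hb => P.add_mem ha hb
      algebraMap_mem' := fun c => by
        show algebraMap K L c ∈ P
        rw [Algebra.algebraMap_eq_smul_one]; exact P.smul_mem c h1 } with hM
  have hMP : Subalgebra.toSubmodule M = P := rfl
  have hinv : ∀ x ∈ M, x⁻¹ ∈ M := by
    intro x hx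
    rcases eq_or_ne x 0 with rfl | hx0
    · simp only [inv_zero]; exact P.zero_mem
    · -- left multiplication by x on P is injective, hence surjective
      let f : P →ₗ[K] P := LinearMap.restrict (LinearMap.mulLeft K x)
        (fun y hy => hmul (mul_mem_mul hx hy))
      have hinj : Function.Injective f := by
        intro a b hab
        have : x * (a : L) = x * (b : L) := by
          have := congrArg (Subtype.val) hab
          simpa [f, LinearMap.restrict_apply] using this
        exact Subtype.ext (mul_left_cancel₀ hx0 this)
      have hsurj : Function.Surjective f := LinearMap.surjective_of_injective hinj
      obtain ⟨y, hy⟩ := hsurj ⟨1, h1⟩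
      have hxy : x * (y : L) = 1 := by
        have := congrArg (Subtype.val) hy
        simpa [f, LinearMap.restrict_apply] using this
      rw [show x⁻¹ = (y : L) from (eq_inv_of_mul_eq_one_right hxy).symm]
      exact y.2
  haveI : FiniteDimensional K M := ‹FiniteDimensional K P›
  rcases h M hinv ‹_› with hbot | htop
  · left; rw [← hMP, hbot, Algebra.toSubmodule_bot]
  · right; rw [← hMP, htop]; rfl


theorem comap_finset_inf {V W : Type*} [AddCommGroup V] [Module K V] [AddCommGroup W]
    [Module K W] (f : W →ₗ[K] V) {n : ℕ} (U : Fin n → Submodule K V) (t : Finset (Fin n)) :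
    Submodule.comap f (t.inf U) = t.inf (fun i => Submodule.comap f (U i)) := by
  classical
  induction t using Finset.cons_induction with
  | empty => simp
  | cons i t hi ihd => rw [Finset.inf_cons, Finset.inf_cons, Submodule.comap_inf, ihd]

theorem forward_lmp (hyp : HypSub K L) : LinearMatchingProperty K L := by
  intro n hn A B hA hB h1B m a ha
  classical
  haveI hfdA : FiniteDimensional K A := FiniteDimensional.of_finrank_pos (by omega)
  haveI hfdB : FiniteDimensional K B := FiniteDimensional.of_finrank_pos (by omega)
  -- the basis size must be n
  have hmn : m = n := by
    have h1 : finrank K ↥(span K (Set.range a)) = m := by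
      rw [finrank_span_eq_card ha.1, Fintype.card_fin]
    rw [ha.2, hA] at h1
    omega
  subst hmn
  -- A is proper
  have hAtop : A ≠ ⊤ := by
    intro h
    haveI : FiniteDimensional K (⊤ : Submodule K L) := h ▸ hfdA
    haveI : FiniteDimensional K L := Module.Finite.equiv Submodule.topEquiv
    have h2 : finrank K L = m := by rw [← finrank_top K L, ← h, hA]
    have h3 : B = ⊤ := Submodule.eq_top_of_finrank_eq (by rw [hB, h2])
    exact h1B (h3 ▸ Submodule.mem_top)
  -- the obstruction subspaces
  set Si : Fin m → Submodule K L :=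
    fun i => B ⊓ Submodule.comap (LinearMap.mulLeft K (a i)) A with hSidef
  set S' : Fin m → Submodule K ↥B := fun i => Submodule.comap B.subtype (Si i) with hS'def
  have hall : ∀ I : Finset (Fin m), finrank K ↥(I.inf S') + I.card ≤ m := by
    intro I
    rcases Finset.eq_empty_or_nonempty I with rfl | ⟨i₁, hi₁⟩
    · simp only [Finset.inf_empty, Finset.card_empty, add_zero]
      exact (Submodule.finrank_le _).trans hB.le
    · set T : Submodule K L := I.inf Si with hTdef
      have hTB : T ≤ B := le_trans (Finset.inf_le hi₁) inf_le_left
      haveI hTfd : FiniteDimensional K T := Submodule.finiteDimensional_of_le hTB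
      have h1T : (1 : L) ∉ T := fun h => h1B (hTB h)
      set T' : Submodule K L := T ⊔ span K {(1:L)} with hT'def
      have h1T' : (1 : L) ∈ T' := Submodule.mem_sup_right (Submodule.mem_span_singleton_self 1)
      have hT'fg : T'.FG := by
        apply fgSup ((Submodule.fg_iff_finiteDimensional T).2 hTfd)
        exact Submodule.fg_span (Set.finite_singleton 1)
      have hTinf : T ⊓ span K {(1:L)} = ⊥ := by
        rw [eq_bot_iff]
        rintro x ⟨hx1, hx2⟩
        obtain ⟨c, rfl⟩ := Submodule.mem_span_singleton.1 hx2
        rcases eq_or_ne c 0 with rfl | hc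
        · simp
        · exfalso
          apply h1T
          have := T.smul_mem c⁻¹ hx1
          rwa [smul_smul, inv_mul_cancel₀ hc, one_smul] at this
      have hT'rank : finrank K T' = finrank K T + 1 := by
        have := Submodule.finrank_sup_add_finrank_inf_eq T (span K {(1:L)})
        rw [hTinf, finrank_bot, finrank_span_singleton (one_ne_zero : (1:L) ≠ 0)] at this
        rw [hT'def]
        omega
      set W : Submodule K L := span K (a '' ↑I) with hWdef
      have hWA : W ≤ A := by
        rw [← ha.2]
        exact Submodule.span_mono (Set.image_subset_range a ↑I)
      have hWfg : W.FG := Submodule.fg_span (Set.Finite.image a I.finite_toSet)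
      have hW0 : W ≠ ⊥ := by
        intro h
        have hmem : a i₁ ∈ W := Submodule.subset_span ⟨i₁, hi₁, rfl⟩
        rw [h] at hmem
        exact (ha.1.ne_zero i₁) (by simpa using hmem)
      have hWrank : finrank K W = I.card := by
        have hli : LinearIndependent K (fun j : {x // x ∈ I} => a j.1) :=
          ha.1.comp Subtype.val Subtype.val_injective
        have hr : Set.range (fun j : {x // x ∈ I} => a j.1) = a '' ↑I := by
          ext y
          constructor
          · rintro ⟨j, rfl⟩
            exact ⟨j.1, j.2, rfl⟩
          · rintro ⟨x, hx, rfl⟩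
            exact ⟨⟨x, hx⟩, rfl⟩
        rw [hWdef, ← hr, finrank_span_eq_card hli, Fintype.card_coe]
      -- W * T' ≤ A
      have hWT'A : W * T' ≤ A := by
        rw [Submodule.mul_le]
        intro w hw t' ht'
        obtain ⟨t, ht, z, hz, rfl⟩ := Submodule.mem_sup.1 ht'
        obtain ⟨c, rfl⟩ := Submodule.mem_span_singleton.1 hz
        have hwt : w * t ∈ A := by
          refine Submodule.span_induction ?_ ?_ ?_ ?_ hw
          · rintro y ⟨i, hiI, rfl⟩
            have hTle : T ≤ Submodule.comap (LinearMap.mulLeft K (a i)) A :=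
              le_trans (Finset.inf_le hiI) inf_le_right
            exact hTle ht
          · rw [zero_mul]; exact A.zero_mem
          · intro y z _ _ hy hz2
            rw [add_mul]; exact A.add_mem hy hz2
          · intro c2 y _ hy
            rw [smul_mul_assoc]; exact A.smul_mem c2 hy
        have hwc : w * (c • 1) ∈ A := by
          rw [mul_smul_comm, mul_one]
          exact A.smul_mem c (hWA hw)
        rw [mul_add]
        exact A.add_mem hwt hwc
      have hWT'top : W * T' ≠ ⊤ := fun h => hAtop (top_le_iff.1 (h ▸ hWT'A))
      have hkn := kneser hyp h1T' hT'fg hW0 hWfg hWT'top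
      have hWT'le : finrank K (W * T') ≤ m := by
        have := Submodule.finrank_mono hWT'A
        rwa [hA] at this
      -- relate finrank of the inf downstairs
      have hinfeq : I.inf S' = Submodule.comap B.subtype T := by
        rw [hS'def, hTdef, comap_finset_inf]
      have hrankeq : finrank K ↥(I.inf S') = finrank K T := by
        rw [hinfeq]
        exact LinearEquiv.finrank_eq (Submodule.comapSubtypeEquivOfLe hTB)
      omega
  obtain ⟨b', hb'li, hb'span, hb'cond⟩ := basis_selection (V := ↥B) (by omega) hB S' hall
  refine ⟨fun i => (b' i : L), ⟨?_, ?_⟩, ?_⟩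
  · exact hb'li.map' B.subtype (Submodule.ker_subtype B)
  · have hr2 : Set.range (fun i => ((b' i : L))) = B.subtype '' Set.range b' := by
      rw [← Set.range_comp]
      rfl
    rw [hr2, Submodule.span_image, hb'span, Submodule.map_subtype_top]
  · intro i x hxB hxA
    have hmem : (⟨x, hxB⟩ : ↥B) ∈ S' i := by
      rw [hS'def]
      refine Submodule.mem_comap.2 (Submodule.mem_inf.2 ⟨hxB, Submodule.mem_comap.2 ?_⟩)
      simpa using hxA
    have hspan := hb'cond i hmem
    have h2 : x ∈ Submodule.map B.subtype (span K (b' '' {j | j ≠ i})) :=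
      ⟨⟨x, hxB⟩, hspan, rfl⟩
    rw [Submodule.map_span, ← Set.image_comp] at h2
    simpa [Function.comp] using h2

theorem backward_lmp (hlmp : LinearMatchingProperty K L) (M : Subalgebra K L)
    (hMfd : FiniteDimensional K M) : M = ⊥ ∨ M = ⊤ := by
  classical
  by_contra hcon
  push_neg at hcon
  obtain ⟨hMbot, hMtop⟩ := hcon
  set P : Submodule K L := Subalgebra.toSubmodule M with hPdef
  haveI hPfd : FiniteDimensional K P := hMfd
  set n := finrank K P with hn
  have h1P : (1:L) ∈ P := M.one_mem
  -- n ≥ 2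
  have hlt : (1 : Submodule K L) < P := by
    refine lt_of_le_of_ne ?_ ?_
    · rw [Submodule.one_eq_span, Submodule.span_le]
      intro y hy
      rw [Set.mem_singleton_iff] at hy
      subst hy
      exact h1P
    · intro h
      exact hMbot (Subalgebra.toSubmodule_injective (by rw [← hPdef, ← h, Algebra.toSubmodule_bot]))
  have hn2 : 2 ≤ n := by
    have := Submodule.finrank_lt_finrank_of_lt hlt
    rw [finrank_one_submodule] at this
    omega
  obtain ⟨z, hz⟩ : ∃ z, z ∉ M := by
    by_contra h
    push_neg at h
    exact hMtop (eq_top_iff.2 (fun x _ => h x))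
  have hzP : z ∉ P := hz
  have hz0 : z ≠ 0 := fun h => hz (by rw [h]; exact M.zero_mem)
  -- a hyperplane of P avoiding 1
  set one' : ↥P := ⟨1, h1P⟩ with hone'
  have hone0 : one' ≠ 0 := by
    intro h
    exact one_ne_zero (α := L) (congrArg Subtype.val h)
  obtain ⟨C, hC⟩ := Submodule.exists_isCompl (span K {one'})
  set M' : Submodule K L := Submodule.map P.subtype C with hM'def
  have hM'P : M' ≤ P := Submodule.map_subtype_le P C
  haveI hM'fd : FiniteDimensional K M' := Submodule.finiteDimensional_of_le hM'P
  have hM'rank : finrank K M' + 1 = n := by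
    have e1 : finrank K ↥(span K {one'}) + finrank K C = finrank K ↥P :=
      Submodule.finrank_add_eq_of_isCompl hC
    have e2 : finrank K ↥(span K {one'}) = 1 := finrank_span_singleton hone0
    have e3 : finrank K M' = finrank K C :=
      (LinearEquiv.finrank_eq (Submodule.equivMapOfInjective P.subtype
        (Submodule.injective_subtype P) C)).symm
    omega
  have h1M' : (1:L) ∉ M' := by
    rintro ⟨y, hyC, hy1⟩
    have hy : y = one' := Subtype.ext hy1
    subst hy
    have h2 : one' ∈ span K {one'} ⊓ C := ⟨Submodule.mem_span_singleton_self one', hyC⟩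
    rw [hC.inf_eq_bot] at h2
    exact hone0 (by simpa using h2)
  -- the space B
  set Bm : Submodule K L := M' ⊔ span K {z} with hBdef
  have hMinf : M' ⊓ span K {z} = ⊥ := by
    rw [eq_bot_iff]
    rintro x ⟨hx1, hx2⟩
    obtain ⟨c, rfl⟩ := Submodule.mem_span_singleton.1 hx2
    rcases eq_or_ne c 0 with rfl | hc
    · simp
    · exfalso
      apply hzP
      apply hM'P
      have := M'.smul_mem c⁻¹ hx1
      rwa [smul_smul, inv_mul_cancel₀ hc, one_smul] at this
  have hBrank : finrank K Bm = n := by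
    have e1 : finrank K ↥(M' ⊔ span K {z}) + finrank K ↥(M' ⊓ span K {z})
        = finrank K M' + finrank K ↥(span K {z}) :=
      Submodule.finrank_sup_add_finrank_inf_eq M' (span K {z})
    rw [hMinf, finrank_bot, finrank_span_singleton hz0] at e1
    rw [hBdef]
    omega
  have h1B : (1:L) ∉ Bm := by
    intro h
    obtain ⟨y, hy, w, hw, hsum⟩ := Submodule.mem_sup.1 h
    obtain ⟨c, rfl⟩ := Submodule.mem_span_singleton.1 hw
    rcases eq_or_ne c 0 with rfl | hc
    · rw [zero_smul, add_zero] at hsum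
      exact h1M' (hsum ▸ hy)
    · apply hzP
      have hcz : c • z = 1 - y := eq_sub_of_add_eq' hsum
      have hP1y : (1:L) - y ∈ P := P.sub_mem h1P (hM'P hy)
      have := P.smul_mem c⁻¹ (hcz ▸ P.smul_mem c (by
        have h2 : z = c⁻¹ • ((1:L) - y) := by
          rw [← hcz, smul_smul, inv_mul_cancel₀ hc, one_smul]
        rw [h2]
        exact P.smul_mem c⁻¹ hP1y))
      have h2 : z = c⁻¹ • ((1:L) - y) := by
        rw [← hcz, smul_smul, inv_mul_cancel₀ hc, one_smul]
      rw [h2]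
      exact P.smul_mem c⁻¹ hP1y
  -- apply the matching property
  have hsm : SubspaceMatched K P Bm := hlmp n (by omega) P Bm hn.symm hBrank h1B
  -- a basis of P
  let bP := Module.finBasis K ↥P
  set a : Fin n → L := fun i => (bP (finCongr hn i) : L) with hadef
  have haP : IsLinBasis K a P := by
    constructor
    · have h1 : LinearIndependent K (fun j => (bP j : L)) :=
        bP.linearIndependent.map' P.subtype (Submodule.ker_subtype P)
      exact h1.comp (finCongr hn) (finCongr hn).injective
    · have hr : Set.range a = P.subtype '' Set.range bP := by
        ext y
        constructor
        · rintro ⟨i, rfl⟩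
          exact ⟨bP (finCongr hn i), ⟨finCongr hn i, rfl⟩, rfl⟩
        · rintro ⟨-, ⟨j, rfl⟩, rfl⟩
          exact ⟨(finCongr hn).symm j, by simp [hadef]; rfl⟩
      rw [hr, Submodule.span_image, bP.span_eq, Submodule.map_subtype_top]
  obtain ⟨b, hbB, hmatch⟩ := hsm n a haP
  -- every element of M' lies in all the coordinate hyperplanes
  have hM'b : ∀ x ∈ M', ∀ i, x ∈ span K (b '' {j | j ≠ i}) := by
    intro x hx i
    apply hmatch i x (Submodule.mem_sup_left hx)
    have haiP : a i ∈ P := by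
      rw [hadef]
      exact (bP (finCongr hn i)).2
    exact M.mul_mem haiP (hM'P hx)
  have hM'ne : M' ≠ ⊥ := by
    intro h
    rw [h, finrank_bot] at hM'rank
    omega
  obtain ⟨x, hxM', hx0⟩ := Submodule.exists_mem_ne_zero_of_ne_bot hM'ne
  have hbli : LinearIndependent K b := hbB.1
  have hreps : ∀ i : Fin n, ∃ l : Fin n →₀ K,
      l ∈ Finsupp.supported K K {j | j ≠ i} ∧ Finsupp.linearCombination K b l = x := by
    intro i
    have := (Finsupp.mem_span_image_iff_linearCombination K).1 (hM'b x hxM' i)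
    obtain ⟨l, hl1, hl2⟩ := this
    exact ⟨l, hl1, hl2⟩
  choose l hlsupp hlcomb using hreps
  have hleq : ∀ i j, l i = l j := by
    intro i j
    have h0 : Finsupp.linearCombination K b (l i - l j) = 0 := by
      rw [map_sub, hlcomb, hlcomb, sub_self]
    exact sub_eq_zero.1 (linearIndependent_iff.1 hbli _ h0)
  have hl0 : l ⟨0, by omega⟩ = 0 := by
    ext k
    have h1 : l ⟨0, by omega⟩ k = l k k := by rw [hleq ⟨0, by omega⟩ k]
    have h2 : l k k = 0 := by
      by_contra hne
      have hk : k ∈ (l k).support := Finsupp.mem_support_iff.2 hne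
      have := hlsupp k hk
      exact this rfl
    rw [h1, h2]
    simp
  apply hx0
  rw [← hlcomb ⟨0, by omega⟩, hl0, map_zero]

end Main

end KMatch

/-- `L` has the linear matching property over `K` iff every intermediate sub-division-ring
`K ⊆ M ⊆ L` (a subalgebra closed under inverses) which is finite-dimensional over `K`
equals `K` or `L`. -/
theorem linearMatchingProperty_iff {K L : Type*} [Field K] [DivisionRing L] [Algebra K L] :
    LinearMatchingProperty K L ↔
      ∀ M : Subalgebra K L, (∀ x ∈ M, x⁻¹ ∈ M) → FiniteDimensional K M →
        (M = ⊥ ∨ M = ⊤) := by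
  constructor
  · intro h
    exact fun M _ hfd => KMatch.backward_lmp h M hfd
  · intro h
    exact KMatch.forward_lmp (KMatch.hypSub_of_subalg h)
end

section
/- If a ∈ L has finite degree n ≥ 2 over K and the subfield K(a) generated by a over K is a proper subset of L, then for any x ∈ L \ K(a), the n-dimensional subspaces A = K(a) and B = span_K(a, a², …, a^{n−1}, x) satisfy: the basis {1, a, …, a^{n−1}} of A cannot be matched to any basis of B; in particular A is not matched to B and L does not have the linear matching property over K. -/
/-- If `a ∈ L` has finite degree `n ≥ 2` over `K` (so `1, a, …, a^{n-1}` are linearly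
independent and `aⁿ ∈ A := K(a) = span (1, a, …, a^{n-1})`), and `K(a) ⊊ L`, witnessed by
`x ∈ L \ K(a)`, then with `B := span (a, a², …, a^{n-1}, x)`, the basis `{1, a, …, a^{n-1}}`
of `A` cannot be matched to any basis of `B`; in particular `A` is not matched to `B` and
`L` does not have the linear matching property over `K`. -/
theorem not_matchable_of_proper_subfield {K L : Type*} [Field K] [DivisionRing L]
    [Algebra K L] {n : ℕ} (hn : 2 ≤ n) (a x : L) (A B : Submodule K L)
    (hAdef : A = Submodule.span K (Set.range fun i : Fin n => a ^ (i : ℕ)))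
    (hBdef : B = Submodule.span K
      (Set.range fun i : Fin n => if (i : ℕ) + 1 < n then a ^ ((i : ℕ) + 1) else x))
    (hind : LinearIndependent K (fun i : Fin n => a ^ (i : ℕ)))
    (hdeg : a ^ n ∈ A) (hx : x ∉ A) :
    (¬ ∃ b : Fin n → L, IsLinBasis K b B ∧
        MatchedBases K (fun i : Fin n => a ^ (i : ℕ)) b A B) ∧
      ¬ SubspaceMatched K A B ∧ ¬ LinearMatchingProperty K L := by
  have h0n : 0 < n := by omega
  have hpowA : ∀ k, k ≤ n → a ^ k ∈ A := by
    intro k hk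
    rcases eq_or_lt_of_le hk with rfl | hk'
    · exact hdeg
    · rw [hAdef]
      exact Submodule.subset_span ⟨⟨k, hk'⟩, rfl⟩
  have hane : a ≠ 0 := by
    intro h
    have h1 := hind.ne_zero ⟨1, by omega⟩
    simp [h] at h1
  -- main part : the fixed basis of A cannot be matched
  have main : ¬ ∃ b : Fin n → L, IsLinBasis K b B ∧
      MatchedBases K (fun i : Fin n => a ^ (i : ℕ)) b A B := by
    rintro ⟨b, ⟨hbind, hbspan⟩, hmatch⟩
    have haB : a ∈ B := by
      rw [hBdef]
      exact Submodule.subset_span ⟨⟨0, h0n⟩, by simp [show 0 + 1 < n by omega]⟩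
    have hmem : ∀ i : Fin n, a ∈ Submodule.span K (b '' {j | j ≠ i}) := by
      intro i
      refine hmatch i a haB ?_
      have : a ^ (i : ℕ) * a = a ^ ((i : ℕ) + 1) := (pow_succ a _).symm
      rw [this]
      exact hpowA _ (by omega)
    have hrep : ∀ i : Fin n, ∃ l ∈ Finsupp.supported K K {j | j ≠ i},
        Finsupp.linearCombination K b l = a := fun i =>
      (Finsupp.mem_span_image_iff_linearCombination K).mp (hmem i)
    choose l hl hlc using hrep
    set i0 : Fin n := ⟨0, h0n⟩ with hi0
    have hleq : ∀ i, l i = l i0 := by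
      intro i
      have hz : Finsupp.linearCombination K b (l i - l i0) = 0 := by
        rw [map_sub, hlc, hlc, sub_self]
      exact sub_eq_zero.mp (linearIndependent_iff.mp hbind _ hz)
    have hl0 : l i0 = 0 := by
      ext j
      have hj : (l j) j = 0 := by
        have := (Finsupp.mem_supported' K _).mp (hl j) j (by simp)
        exact this
      rw [← hleq j]
      simpa using hj
    have : a = 0 := by rw [← hlc i0, hl0, map_zero]
    exact hane this
  -- n = m + 1
  obtain ⟨m, rfl⟩ : ∃ m, n = m + 1 := ⟨n - 1, by omega⟩
  -- the generating family of B
  have hfeq : (fun i : Fin (m + 1) => if (i : ℕ) + 1 < m + 1 then a ^ ((i : ℕ) + 1) else x)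
      = Fin.snoc (fun i : Fin m => a ^ ((i : ℕ) + 1)) x := by
    funext i
    induction i using Fin.lastCases with
    | last => simp
    | cast j => simp [Fin.snoc_castSucc, j.isLt]
  have hvind : LinearIndependent K (fun i : Fin m => a ^ ((i : ℕ) + 1)) := by
    have hg : Function.Injective (fun i : Fin m => (⟨(i : ℕ) + 1, by omega⟩ : Fin (m + 1))) := by
      intro i j hij
      simp only [Fin.mk.injEq, add_left_inj] at hij
      exact Fin.val_injective hij
    exact hind.comp _ hg
  have hvsub : Submodule.span K (Set.range fun i : Fin m => a ^ ((i : ℕ) + 1)) ≤ A := by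
    rw [Submodule.span_le]
    rintro _ ⟨i, rfl⟩
    exact hpowA _ (by omega)
  have hxs : x ∉ Submodule.span K (Set.range fun i : Fin m => a ^ ((i : ℕ) + 1)) :=
    fun h => hx (hvsub h)
  have hfind : LinearIndependent K
      (fun i : Fin (m + 1) => if (i : ℕ) + 1 < m + 1 then a ^ ((i : ℕ) + 1) else x) := by
    rw [hfeq]
    exact linearIndependent_fin_snoc.mpr ⟨hvind, hxs⟩
  -- finranks
  have hfinA : Module.finrank K A = m + 1 := by
    rw [hAdef, finrank_span_eq_card hind, Fintype.card_fin]
  have hfinB : Module.finrank K B = m + 1 := by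
    rw [hBdef, finrank_span_eq_card hfind, Fintype.card_fin]
  -- 1 ∉ B
  have h1B : (1 : L) ∉ B := by
    intro h1
    rw [hBdef, hfeq, Submodule.mem_span_range_iff_exists_fun] at h1
    obtain ⟨c, hc⟩ := h1
    rw [Fin.sum_univ_castSucc] at hc
    simp only [Fin.snoc_castSucc, Fin.snoc_last] at hc
    set y : L := ∑ i : Fin m, c i.castSucc • a ^ ((i : ℕ) + 1) with hy
    by_cases hcl : c (Fin.last m) = 0
    · have h1y : (1 : L) = y := by
        rw [← hc, hcl, zero_smul, add_zero]
      have hyim : y ∈ Submodule.span K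
          ((fun i : Fin (m + 1) => a ^ (i : ℕ)) '' {j | j ≠ (⟨0, h0n⟩ : Fin (m + 1))}) := by
        refine Submodule.sum_mem _ fun i _ => Submodule.smul_mem _ _ (Submodule.subset_span ?_)
        exact ⟨⟨(i : ℕ) + 1, by omega⟩, fun h => Nat.succ_ne_zero _ (congrArg Fin.val h), rfl⟩
      have hnot := hind.notMem_span_image (s := {j | j ≠ (⟨0, h0n⟩ : Fin (m + 1))})
        (x := (⟨0, h0n⟩ : Fin (m + 1))) (by simp)
      simp only [pow_zero] at hnot
      exact hnot (h1y ▸ hyim)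
    · have hyA : y ∈ A := by
        refine Submodule.sum_mem _ fun i _ => Submodule.smul_mem _ _ (hpowA _ (by omega))
      have hxA : x = (c (Fin.last m))⁻¹ • ((1 : L) - y) := by
        rw [← hc]
        rw [add_sub_cancel_left, smul_smul, inv_mul_cancel₀ hcl, one_smul]
      have : x ∈ A := by
        rw [hxA]
        have h1A : (1 : L) ∈ A := by simpa using hpowA 0 (by omega)
        exact Submodule.smul_mem _ _ (Submodule.sub_mem _ h1A hyA)
      exact hx this
  refine ⟨main, ?_, ?_⟩
  · intro hS
    exact main (hS (m + 1) _ ⟨hind, hAdef.symm⟩)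
  · intro hL
    exact main (hL (m + 1) (by omega) A B hfinA hfinB h1B (m + 1) _ ⟨hind, hAdef.symm⟩)
end
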